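/- arXiv:1509.08821 — 5 statements merged into one kernel-verified Lean document; each statement's English description precedes it below -/
import Mathlib

section
/- Let S ⊆ ℕ be a symmetric cofinite set with 0 ∈ S and genus δ = δ_S. Let a_1 < a_2 < … < a_d be the elements of the image of the function n ↦ Γ_S(n) − n, and set a'_k = δ − a_{d+1−k} for k = 1, …, d. Then Γ_S(a'_k) − a'_k = a_k for every k = 1, …, d. -/
/-- The enumerating function of a set `S ⊆ ℕ`: `enumFun S n` is the `(n+1)`-st smallest
element of `S` (0-indexed `n`-th element). -/
noncomputable def enumFun (S : Set ℕ) : ℕ → ℕ := Nat.nth (· ∈ S)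

/-- The genus of a cofinite set `S ⊆ ℕ`: the number of gaps `#(ℕ \ S)`. -/
noncomputable def genus (S : Set ℕ) : ℕ := Sᶜ.ncard

/-- A cofinite set `S ⊆ ℕ` is symmetric if for every `x` with `0 ≤ x ≤ 2δ_S − 1`,
`x ∈ S ↔ 2δ_S − 1 − x ∉ S`. -/
noncomputable def IsSymmetricSet (S : Set ℕ) : Prop :=
  ∀ x : ℕ, x ≤ 2 * genus S - 1 → (x ∈ S ↔ (2 * genus S - 1 - x) ∉ S)

noncomputable local instance (priority := low) (p : ℕ → Prop) : DecidablePred p :=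
  fun x => Classical.propDecidable (p x)

/-- number of elements of `S` below `x` -/
private noncomputable def eS (S : Set ℕ) : ℕ → ℕ := Nat.count (· ∈ S)

/-- number of gaps of `S` below `x` -/
private noncomputable def gS (S : Set ℕ) : ℕ → ℕ := Nat.count (fun x => x ∉ S)

private lemma heg (S : Set ℕ) (x : ℕ) : eS S x + gS S x = x := by
  induction x with
  | zero => simp [eS, gS]
  | succ n ih =>
    unfold eS gS at *
    rw [Nat.count_succ, Nat.count_succ]
    by_cases h : n ∈ S <;> simp [h] <;> omega

private lemma hgstep (S : Set ℕ) {x : ℕ} (hx : x ∈ S) : gS S (x + 1) = gS S x := by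
  unfold gS
  rw [Nat.count_succ]
  simp [hx]

private lemma hestep (S : Set ℕ) {x : ℕ} (hx : x ∈ S) : eS S (x + 1) = eS S x + 1 := by
  unfold eS
  rw [Nat.count_succ]
  simp [hx]

private lemma hcount_le (S : Set ℕ) (a n : ℕ) : gS S (a + n) ≤ gS S a + n := by
  induction n with
  | zero => simp
  | succ m ih =>
    unfold gS at *
    rw [← Nat.add_assoc, Nat.count_succ]
    by_cases h : (a + m) ∈ S <;> simp [h] <;> omega

private lemma hSinf {S : Set ℕ} (hS : Sᶜ.Finite) : {x | x ∈ S}.Infinite := by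
  have h := hS.infinite_compl
  rwa [compl_compl] at h

private lemma henum_mem {S : Set ℕ} (hS : Sᶜ.Finite) (m : ℕ) : enumFun S m ∈ S :=
  Nat.nth_mem_of_infinite (hSinf hS) m

private lemma hecount {S : Set ℕ} (hS : Sᶜ.Finite) (m : ℕ) : eS S (enumFun S m) = m :=
  Nat.count_nth_of_infinite (hSinf hS) m

private lemma hnth_count {S : Set ℕ} {x : ℕ} (hx : x ∈ S) : enumFun S (eS S x) = x :=
  Nat.nth_count hx

private lemma hgmono (S : Set ℕ) : Monotone (gS S) := Nat.count_monotone _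

private lemma hemono (S : Set ℕ) : Monotone (eS S) := Nat.count_monotone _

/-- The main strict antitonicity lemma: `v ↦ Γ(δ - v) - (δ - v)` is strictly
antitone on the image of `n ↦ Γ(n) - n`. -/
private lemma main_anti {S : Set ℕ} (hS : Sᶜ.Finite) (h0 : 0 ∈ S) (hsym : IsSymmetricSet S) :
    ∀ ⦃v w : ℕ⦄, (∃ m, enumFun S m - m = v) → (∃ m, enumFun S m - m = w) → v < w →
      enumFun S (genus S - w) - (genus S - w) < enumFun S (genus S - v) - (genus S - v) := by
  classical
  set δ := genus S with hδdef
  have hsym' : ∀ x, x ≤ 2 * δ - 1 → (x ∈ S ↔ (2 * δ - 1 - x) ∉ S) := hsym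
  -- δ ≥ 1
  have hδ1 : 1 ≤ δ := by
    by_contra h
    have hδ0 : δ = 0 := by omega
    have h0' := (hsym' 0 (by omega)).mp h0
    rw [hδ0] at h0'
    norm_num at h0'
    exact h0' h0
  have hsym2 : ∀ x, x < 2 * δ → (x ∈ S ↔ (2 * δ - 1 - x) ∉ S) :=
    fun x hx => hsym' x (by omega)
  -- the key reflection count: gS j + eS (2δ - j) = eS 2δ for j ≤ 2δ
  have key : ∀ j, j ≤ 2 * δ → gS S j + eS S (2 * δ - j) = eS S (2 * δ) := by
    intro j
    induction j with
    | zero => simp [gS, Nat.count_zero]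
    | succ n ih =>
      intro hj
      have hn := ih (by omega)
      have h1 : gS S (n + 1) = gS S n + (if n ∉ S then 1 else 0) := Nat.count_succ _ n
      have h2 : 2 * δ - n = (2 * δ - (n + 1)) + 1 := by omega
      have h3 : eS S (2 * δ - n) = eS S (2 * δ - (n + 1)) + (if (2 * δ - (n + 1)) ∈ S then 1 else 0) := by
        rw [h2]; exact Nat.count_succ _ _
      have h4 : (2 * δ - (n + 1)) ∈ S ↔ n ∉ S := by
        have h5 := hsym2 (2 * δ - (n + 1)) (by omega)
        rw [show 2 * δ - 1 - (2 * δ - (n + 1)) = n by omega] at h5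
        exact h5
      by_cases hn' : n ∈ S
      · have e4 : (2 * δ - (n + 1)) ∉ S := fun hm => (h4.mp hm) hn'
        rw [if_neg (not_not.mpr hn')] at h1
        rw [if_neg e4] at h3
        omega
      · have e4 : (2 * δ - (n + 1)) ∈ S := h4.mpr hn'
        rw [if_pos hn'] at h1
        rw [if_pos e4] at h3
        omega
  -- counts at 2δ
  have heg2δ := heg S (2 * δ)
  have hkey2δ := key (2 * δ) le_rfl
  have he0 : eS S 0 = 0 := Nat.count_zero _
  rw [Nat.sub_self, he0] at hkey2δ
  -- gS (2δ) = eS (2δ), hence both equal δ... need gS(2δ) = δ via total gap count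
  have hg2δcard : gS S (2 * δ) ≤ δ := by
    have hsub : Finset.filter (fun x => x ∉ S) (Finset.range (2 * δ)) ⊆ hS.toFinset := by
      intro x hx
      rw [Finset.mem_filter] at hx
      rw [Set.Finite.mem_toFinset]
      exact hx.2
    have hcard := Finset.card_le_card hsub
    have h1 : gS S (2 * δ) = (Finset.filter (fun x => x ∉ S) (Finset.range (2 * δ))).card :=
      Nat.count_eq_card_filter_range _ _
    have h2 : hS.toFinset.card = δ := (Set.ncard_eq_toFinset_card _ hS).symm
    omega
  have hg2δ : gS S (2 * δ) = δ := by omega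
  have he2δ : eS S (2 * δ) = δ := by omega
  -- all gaps are < 2δ
  have hgap : ∀ x, x ∉ S → x < 2 * δ := by
    intro x hx
    by_contra hc
    have hxge : 2 * δ ≤ x := by omega
    have h1 : gS S (x + 1) = (Finset.filter (fun y => y ∉ S) (Finset.range (x + 1))).card :=
      Nat.count_eq_card_filter_range _ _
    have hsub : Finset.filter (fun y => y ∉ S) (Finset.range (x + 1)) ⊆ hS.toFinset := by
      intro y hy
      rw [Finset.mem_filter] at hy
      rw [Set.Finite.mem_toFinset]
      exact hy.2
    have hcard := Finset.card_le_card hsub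
    have h2 : hS.toFinset.card = δ := (Set.ncard_eq_toFinset_card _ hS).symm
    have h3 : gS S (x + 1) ≤ δ := by omega
    -- but gS (x+1) ≥ gS (2δ) + 1 = δ + 1 since x ∉ S, x ≥ 2δ
    have h4 : gS S x + 1 = gS S (x + 1) := by
      unfold gS; rw [Nat.count_succ, if_pos hx]
    have h5 : gS S (2 * δ) ≤ gS S x := hgmono S hxge
    omega
  -- reflection: gS (2δ - x) + eS x = δ for x ≤ 2δ
  have hrefl : ∀ x, x ≤ 2 * δ → gS S (2 * δ - x) + eS S x = δ := by
    intro x hx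
    have h1 := key (2 * δ - x) (by omega)
    rw [show 2 * δ - (2 * δ - x) = x by omega, he2δ] at h1
    exact h1
  -- the formula lemma
  have hF : ∀ v s : ℕ, s ∈ S → gS S s = v → (s = 0 ∨ (s - 1) ∉ S) →
      enumFun S (δ - v) = 2 * δ - s ∧ s ≤ 2 * δ ∧ eS S s + v = s ∧ v ≤ δ ∧ eS S s ≤ δ := by
    intro v s hsS hgs hmin
    have hes : eS S s + gS S s = s := heg S s
    have hs2δ : s ≤ 2 * δ := by
      rcases hmin with h | h
      · omega
      · have := hgap _ h; omega
    have htmem : (2 * δ - s) ∈ S := by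
      rcases hmin with h | h
      · subst h
        rw [Nat.sub_zero]
        by_contra hc
        exact absurd (hgap _ hc) (by omega)
      · by_cases hs0 : s = 0
        · subst hs0
          rw [Nat.sub_zero]
          by_contra hc
          exact absurd (hgap _ hc) (by omega)
        · have hx := hsym2 (s - 1) (by have := hgap _ h; omega)
          rw [show 2 * δ - 1 - (s - 1) = 2 * δ - s by omega] at hx
          by_contra hmem
          exact h (hx.mpr hmem)
    have hL3 := hrefl s hs2δ
    have h2 : eS S (2 * δ - s) + gS S (2 * δ - s) = 2 * δ - s := heg S _
    have h3 : eS S (2 * δ - s) = δ - v := by omega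
    have h1 : enumFun S (eS S (2 * δ - s)) = 2 * δ - s := hnth_count htmem
    rw [h3] at h1
    refine ⟨h1, hs2δ, by omega, by omega, by omega⟩
  -- the witness lemma: minimal element with given gap count
  have hwit : ∀ m : ℕ, ∃ s, s ∈ S ∧ gS S s = enumFun S m - m ∧ (s = 0 ∨ (s - 1) ∉ S) := by
    intro m
    have hfg : gS S (enumFun S m) = enumFun S m - m := by
      have h1 := heg S (enumFun S m)
      have h2 := hecount hS m
      omega
    have hex : ∃ x, x ∈ S ∧ gS S x = enumFun S m - m := ⟨enumFun S m, henum_mem hS m, hfg⟩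
    set s := Nat.find hex with hsdef
    have hs := Nat.find_spec hex
    refine ⟨s, hs.1, hs.2, ?_⟩
    by_cases h0' : s = 0
    · exact Or.inl h0'
    · right
      intro hmem
      have hgs1 : gS S (s - 1) = gS S s := by
        have h1 : s - 1 + 1 = s := by omega
        conv_rhs => rw [← h1]
        exact (hgstep S hmem).symm
      exact Nat.find_min hex (show s - 1 < s by omega) ⟨hmem, by rw [hgs1]; exact hs.2⟩
  -- main argument
  rintro v w ⟨mv, hmv⟩ ⟨mw, hmw⟩ hvw
  obtain ⟨s, hsS, hgs, hsmin⟩ := hwit mv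
  obtain ⟨s', hs'S, hgs', hs'min⟩ := hwit mw
  rw [hmv] at hgs
  rw [hmw] at hgs'
  obtain ⟨hΓv, hs2δ, hesv, hvδ, hesδ⟩ := hF v s hsS hgs hsmin
  obtain ⟨hΓw, hs'2δ, hes'w, hwδ, hes'δ⟩ := hF w s' hs'S hgs' hs'min
  -- s < s'
  have hss' : s < s' := by
    by_contra hc
    have := hgmono S (show s' ≤ s by omega)
    omega
  -- count increment bound: w ≤ v + (s' - s - 1)
  have hcb : gS S s' ≤ gS S (s + 1) + (s' - (s + 1)) := by
    have h1 := hcount_le S (s + 1) (s' - (s + 1))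
    rw [show s + 1 + (s' - (s + 1)) = s' by omega] at h1
    exact h1
  have hgs1 : gS S (s + 1) = gS S s := hgstep S hsS
  have hcb' : w + s + 1 ≤ v + s' := by omega
  -- e s < δ unless v = δ
  have hesδ' : eS S s < δ ∨ v = δ := by
    by_cases h2 : s = 2 * δ
    · right; rw [← hgs, h2, hg2δ]
    · left
      by_contra h3
      have h3' : eS S s = δ := by omega
      have h4 : eS S (s + 1) ≤ δ := by
        have h5 := hemono S (show s + 1 ≤ 2 * δ by omega)
        omega
      have h5 : eS S (s + 1) = eS S s + 1 := hestep S hsS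
      omega
  rw [hΓv, hΓw]
  rcases hesδ' with h | h
  · omega
  · omega

/-- Let `a 1 < a 2 < ⋯ < a d` enumerate the image of `n ↦ Γ_S(n) − n` and let
`a'_k = δ_S − a (d+1−k)`. Then `Γ_S(a'_k) − a'_k = a k` for all `1 ≤ k ≤ d`. -/
theorem stmt3 (S : Set ℕ) (hS : Sᶜ.Finite) (h0 : 0 ∈ S) (hsym : IsSymmetricSet S)
    (d : ℕ) (a : ℕ → ℕ) (hmono : StrictMonoOn a (Set.Icc 1 d))
    (himg : a '' Set.Icc 1 d = Set.range (fun n => enumFun S n - n)) :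
    ∀ k : ℕ, 1 ≤ k → k ≤ d →
      enumFun S (genus S - a (d + 1 - k)) - (genus S - a (d + 1 - k)) = a k := by
  classical
  intro k hk1 hkd
  have hanti := main_anti hS h0 hsym
  have haI : ∀ j, 1 ≤ j → j ≤ d → a j ∈ Set.range (fun n => enumFun S n - n) := by
    intro j h1 h2
    rw [← himg]
    exact ⟨j, Set.mem_Icc.mpr ⟨h1, h2⟩, rfl⟩
  have hfinIm : (Set.range fun n => enumFun S n - n).Finite := by
    rw [← himg]
    exact (Set.finite_Icc 1 d).image a
  have hcard : hfinIm.toFinset.card = d := by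
    have h1 : (Set.range fun n => enumFun S n - n).ncard = d := by
      rw [← himg, Set.ncard_image_of_injOn hmono.injOn,
        show (Set.Icc 1 d) = ↑(Finset.Icc 1 d) from (Finset.coe_Icc 1 d).symm,
        Set.ncard_coe_finset, Nat.card_Icc]
      omega
    rw [← h1, Set.ncard_eq_toFinset_card _ hfinIm]
  -- the two strictly monotone enumerations
  have hF1mono : StrictMono (fun i : Fin d => a (i.1 + 1)) := by
    intro i j hij
    have hi := i.isLt
    have hj := j.isLt
    have hij' : (i : ℕ) < (j : ℕ) := hij
    exact hmono (Set.mem_Icc.mpr ⟨by omega, by omega⟩) (Set.mem_Icc.mpr ⟨by omega, by omega⟩)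
      (by omega)
  have hF1mem : ∀ i : Fin d, a (i.1 + 1) ∈ hfinIm.toFinset := by
    intro i
    have hi := i.isLt
    rw [Set.Finite.mem_toFinset]
    exact haI _ (by omega) (by omega)
  have hF2mono : StrictMono (fun i : Fin d =>
      enumFun S (genus S - a (d - i.1)) - (genus S - a (d - i.1))) := by
    intro i j hij
    have hi := i.isLt
    have hj := j.isLt
    have hij' : (i : ℕ) < (j : ℕ) := hij
    have hlt : a (d - j.1) < a (d - i.1) :=
      hmono (Set.mem_Icc.mpr ⟨by omega, by omega⟩) (Set.mem_Icc.mpr ⟨by omega, by omega⟩)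
        (by omega)
    obtain ⟨mj, hmj⟩ := haI (d - j.1) (by omega) (by omega)
    obtain ⟨mi, hmi⟩ := haI (d - i.1) (by omega) (by omega)
    exact hanti ⟨mj, hmj⟩ ⟨mi, hmi⟩ hlt
  have hF2mem : ∀ i : Fin d,
      enumFun S (genus S - a (d - i.1)) - (genus S - a (d - i.1)) ∈ hfinIm.toFinset := by
    intro i
    rw [Set.Finite.mem_toFinset]
    exact ⟨genus S - a (d - i.1), rfl⟩
  have h1 := Finset.orderEmbOfFin_unique hcard hF1mem hF1mono
  have h2 := Finset.orderEmbOfFin_unique hcard hF2mem hF2mono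
  have h3 : (fun i : Fin d => a (i.1 + 1)) = (fun i : Fin d =>
      enumFun S (genus S - a (d - i.1)) - (genus S - a (d - i.1))) := by
    rw [h1, h2]
  have h4 : a (k - 1 + 1) =
      enumFun S (genus S - a (d - (k - 1))) - (genus S - a (d - (k - 1))) :=
    congrFun h3 ⟨k - 1, by omega⟩
  rw [show k - 1 + 1 = k by omega, show d - (k - 1) = d + 1 - k by omega] at h4
  exact h4.symm
end

section
/- Let S ⊆ ℕ be a symmetric cofinite set with 0 ∈ S and genus δ = δ_S. Let a_1 < a_2 < … < a_d be the elements of the image of the function n ↦ Γ_S(n) − n, and set a'_k = δ − a_{d+1−k} for k = 1, …, d. Then for every k with 1 ≤ k ≤ d − 1 and every n with a'_k ≤ n < a'_{k+1}, one has Γ_S(n) − n = a_k; and for every n ≥ a'_d one has Γ_S(n) − n = a_d. -/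
lemma antitone_aux (g : ℕ → ℕ) (d : ℕ)
    (h : ∀ i j, 1 ≤ i → i < j → j ≤ d → g j < g i) :
    ∀ i j, 1 ≤ i → i ≤ j → j ≤ d → g j + (j - i) ≤ g i := by
  intro i j hi hij hjd
  induction j with
  | zero => omega
  | succ j ih =>
    rcases eq_or_lt_of_le hij with rfl | hlt
    · simp
    · have h1 := ih (by omega) (by omega)
      have h2 := h j (j + 1) (by omega) (by omega) hjd
      omega

/-- Let `a 1 < a 2 < ⋯ < a d` enumerate the image of `n ↦ Γ_S(n) − n` and let
`a'_k = δ_S − a (d+1−k)`. Then for `1 ≤ k ≤ d − 1` and `a'_k ≤ n < a'_{k+1}` one has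
`Γ_S(n) − n = a k`, and for `n ≥ a'_d` one has `Γ_S(n) − n = a d`. -/
theorem stmt4 (S : Set ℕ) (hS : Sᶜ.Finite) (h0 : 0 ∈ S) (hsym : IsSymmetricSet S)
    (d : ℕ) (a : ℕ → ℕ) (hmono : StrictMonoOn a (Set.Icc 1 d))
    (himg : a '' Set.Icc 1 d = Set.range (fun n => enumFun S n - n)) :
    (∀ k : ℕ, 1 ≤ k → k ≤ d - 1 → ∀ n : ℕ,
        genus S - a (d + 1 - k) ≤ n → n < genus S - a (d + 1 - (k + 1)) →
        enumFun S n - n = a k) ∧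
    (∀ n : ℕ, genus S - a 1 ≤ n → enumFun S n - n = a d) := by
  classical
  set δ := genus S with hδ
  set p : ℕ → Prop := (· ∈ S) with hp
  set q : ℕ → Prop := fun x => x ∉ S with hq
  have hSinf : (setOf p).Infinite := by
    have := hS.infinite_compl
    rwa [compl_compl] at this
  have hδpos : 0 < δ := by
    rcases Nat.eq_zero_or_pos δ with h | h
    · exfalso
      have hE : Sᶜ = ∅ := (Set.ncard_eq_zero hS).mp h
      have h1 := (hsym 0 (by omega)).mp h0
      apply h1
      have : 2 * genus S - 1 - 0 ∉ Sᶜ := by rw [hE]; exact Set.notMem_empty _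
      simpa using this
    · exact h
  have hcount_add : ∀ x, Nat.count p x + Nat.count q x = x := by
    intro x
    rw [Nat.count_eq_card_filter_range, Nat.count_eq_card_filter_range]
    have := Finset.card_filter_add_card_filter_not (s := Finset.range x) (p := p)
    simpa [hq] using this
  -- the reflection identity coming from symmetry
  have L2 : ∀ y, y ≤ 2 * δ → Nat.count q y + Nat.count p (2 * δ - y) = Nat.count p (2 * δ) := by
    intro y
    induction y with
    | zero => simp
    | succ y ih =>
      intro hy
      have h1 := ih (by omega)
      have hstep : 2 * δ - y = (2 * δ - (y + 1)) + 1 := by omega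
      rw [hstep, Nat.count_succ] at h1
      rw [Nat.count_succ]
      have hsym' := hsym y (by omega)
      rw [← hδ] at hsym'
      have heq : 2 * δ - 1 - y = 2 * δ - (y + 1) := by omega
      rw [heq] at hsym'
      by_cases hpy : y ∈ S
      · have h2 : ¬ (2 * δ - (y + 1)) ∈ S := hsym'.mp hpy
        simp only [hp, hq] at h1 ⊢
        simp [hpy, h2] at h1 ⊢
        omega
      · have h2 : (2 * δ - (y + 1)) ∈ S := by
          by_contra h3
          exact hpy (hsym'.mpr h3)
        simp only [hp, hq] at h1 ⊢
        simp [hpy, h2] at h1 ⊢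
        omega
  have hp2δ : Nat.count p (2 * δ) = δ := by
    have h1 := L2 (2 * δ) le_rfl
    have h2 := hcount_add (2 * δ)
    simp at h1
    omega
  have hL2' : ∀ y, y ≤ 2 * δ → Nat.count q y + Nat.count p (2 * δ - y) = δ := by
    intro y hy; rw [L2 y hy, hp2δ]
  have hqle : ∀ x, Nat.count q x ≤ δ := by
    intro x
    rw [Nat.count_eq_card_filter_range]
    have hsub : ↑((Finset.range x).filter q) ⊆ Sᶜ := by
      intro y hy
      simp only [Finset.coe_filter, Set.mem_setOf_eq, Finset.mem_range] at hy
      exact hy.2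
    calc ((Finset.range x).filter q).card = (↑((Finset.range x).filter q) : Set ℕ).ncard :=
          (Set.ncard_coe_finset _).symm
      _ ≤ Sᶜ.ncard := Set.ncard_le_ncard hsub hS
      _ = δ := rfl
  have hq_top : ∀ x, 2 * δ ≤ x → Nat.count q x = δ := by
    intro x hx
    have h1 : Nat.count q (2 * δ) ≤ Nat.count q x := Nat.count_monotone q hx
    have h2 := hL2' (2 * δ) le_rfl
    have h3 := hqle x
    simp at h2
    omega
  -- basic facts about the enumerating function
  have hΓmem : ∀ n, Nat.nth p n ∈ S := fun n => Nat.nth_mem_of_infinite hSinf n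
  have hΓsm : StrictMono (Nat.nth p) := Nat.nth_strictMono hSinf
  have hle : ∀ n, n ≤ Nat.nth p n := fun n => hΓsm.le_apply
  have hcountΓ : ∀ n, Nat.count p (Nat.nth p n) = n := Nat.count_nth_of_infinite hSinf
  have hfeq : ∀ n, enumFun S n = Nat.nth p n := fun n => rfl
  have hfq : ∀ n, enumFun S n - n = Nat.count q (Nat.nth p n) := by
    intro n
    have h1 := hcount_add (Nat.nth p n)
    have h2 := hcountΓ n
    have h3 := hle n
    have h4 := hfeq n
    omega
  have hfmono : ∀ m n, m ≤ n → enumFun S m - m ≤ enumFun S n - n := by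
    intro m n h
    rw [hfq, hfq]
    exact Nat.count_monotone q (Nat.nth_monotone hSinf h)
  have hfle : ∀ n, enumFun S n - n ≤ δ := fun n => by rw [hfq]; exact hqle _
  have hΓ0 : enumFun S 0 = 0 := Nat.nth_zero_of_zero h0
  have hf0 : enumFun S 0 - 0 = 0 := by rw [hΓ0]
  have hΓδ : 2 * δ ≤ Nat.nth p δ := by
    by_contra hcon
    push_neg at hcon
    have h1 : Nat.count p (Nat.nth p δ + 1) ≤ Nat.count p (2 * δ) :=
      Nat.count_monotone p (by omega)
    have h2 : Nat.count p (Nat.nth p δ + 1) = δ + 1 := by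
      rw [Nat.count_succ]
      have h3 : p (Nat.nth p δ) := hΓmem δ
      simp [hcountΓ δ, h3]
    omega
  have hfδ : ∀ n, δ ≤ n → enumFun S n - n = δ := by
    intro n hn
    rw [hfq]
    apply hq_top
    calc 2 * δ ≤ Nat.nth p δ := hΓδ
      _ ≤ Nat.nth p n := Nat.nth_monotone hSinf hn
  -- the key equivalence coming from symmetry
  have hkey : ∀ v n, 1 ≤ v → v ≤ δ →
      (v ≤ enumFun S n - n ↔ δ - (enumFun S (δ - v) - (δ - v)) ≤ n) := by
    intro v n hv1 hv2
    set w := δ - v with hw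
    have hΓw : Nat.nth p w < 2 * δ := Nat.nth_lt_of_lt_count (by rw [hp2δ]; omega)
    set G := 2 * δ - 1 - Nat.nth p w with hG
    have hGS : ¬ G ∈ S := by
      have h1 := (hsym (Nat.nth p w) (by rw [← hδ]; omega)).mp (hΓmem w)
      rw [← hδ] at h1
      exact h1
    have hqG1 : Nat.count q (G + 1) = v := by
      have h1 := hL2' (G + 1) (by omega)
      have h2 : 2 * δ - (G + 1) = Nat.nth p w := by omega
      rw [h2, hcountΓ w] at h1
      omega
    have hqG : Nat.count q G = v - 1 := by
      have h1 := Nat.count_succ q G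
      have h2 : q G := hGS
      rw [if_pos h2] at h1
      omega
    have hcpG : Nat.count p (G + 1) = δ - (enumFun S w - w) := by
      have h1 := hcount_add (G + 1)
      have h2 := hfq w
      have h3 := hle w
      have h4 := hfeq w
      have h5 := hfle w
      omega
    constructor
    · intro h
      rw [hfq n] at h
      have h5 : G + 1 ≤ Nat.nth p n := by
        by_contra hcon
        push_neg at hcon
        have h6 : Nat.count q (Nat.nth p n) ≤ Nat.count q G :=
          Nat.count_monotone q (by omega)
        omega
      have h7 : Nat.count p (G + 1) ≤ n := by
        by_contra hcon
        push_neg at hcon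
        have h8 := (Nat.lt_nth_iff_count_lt hSinf (a := n) (b := G + 1)).mp hcon
        omega
      rw [hcpG] at h7
      exact h7
    · intro h
      rw [← hcpG] at h
      have h5 : G + 1 ≤ Nat.nth p n := by
        by_contra hcon
        push_neg at hcon
        have h6 := (Nat.lt_nth_iff_count_lt hSinf (a := n) (b := G + 1)).mpr (by omega)
        omega
      rw [hfq n]
      have h7 : Nat.count q (G + 1) ≤ Nat.count q (Nat.nth p n) := Nat.count_monotone q h5
      omega
  -- facts about the enumeration `a`
  have hmem : ∀ y : ℕ, (∃ m, enumFun S m - m = y) → ∃ j, 1 ≤ j ∧ j ≤ d ∧ a j = y := by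
    intro y hy
    have h1 : y ∈ a '' Set.Icc 1 d := by rw [himg]; exact hy
    obtain ⟨j, hj, hjy⟩ := h1
    exact ⟨j, hj.1, hj.2, hjy⟩
  have hmem' : ∀ j, 1 ≤ j → j ≤ d → ∃ m, enumFun S m - m = a j := by
    intro j h1 h2
    have h3 : a j ∈ Set.range (fun n => enumFun S n - n) := by
      rw [← himg]; exact ⟨j, ⟨h1, h2⟩, rfl⟩
    exact h3
  have hd1 : 1 ≤ d := by
    obtain ⟨j, hj1, hj2, _⟩ := hmem 0 ⟨0, hf0⟩
    omega
  have hamono : MonotoneOn a (Set.Icc 1 d) := hmono.monotoneOn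
  have ha1 : a 1 = 0 := by
    obtain ⟨j, hj1, hj2, hjy⟩ := hmem 0 ⟨0, hf0⟩
    have h1 := hamono (Set.mem_Icc.mpr ⟨le_refl 1, hd1⟩) (Set.mem_Icc.mpr ⟨hj1, hj2⟩) hj1
    omega
  have haled : ∀ j, 1 ≤ j → j ≤ d → a j ≤ δ := by
    intro j h1 h2
    obtain ⟨m, hm⟩ := hmem' j h1 h2
    rw [← hm]
    exact hfle m
  have had : a d = δ := by
    obtain ⟨j, hj1, hj2, hjy⟩ := hmem δ ⟨δ, hfδ δ le_rfl⟩
    have h3 := hamono (Set.mem_Icc.mpr ⟨hj1, hj2⟩) (Set.mem_Icc.mpr ⟨hd1, le_rfl⟩) hj2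
    have h4 := haled d hd1 le_rfl
    omega
  have hlt_of_lt : ∀ i j, 1 ≤ i → i ≤ d → 1 ≤ j → j ≤ d → a i < a j → i < j := by
    intro i j hi1 hi2 hj1 hj2 hij
    by_contra h
    push_neg at h
    have := hamono (Set.mem_Icc.mpr ⟨hj1, hj2⟩) (Set.mem_Icc.mpr ⟨hi1, hi2⟩) h
    omega
  -- the involution property
  have hinv : ∀ v, (∃ m, enumFun S m - m = v) →
      enumFun S (δ - (enumFun S (δ - v) - (δ - v))) - (δ - (enumFun S (δ - v) - (δ - v))) = v := by
    rintro v ⟨m, hm⟩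
    rcases Nat.eq_zero_or_pos v with rfl | hv
    · rw [Nat.sub_zero, hfδ δ le_rfl, Nat.sub_self]
      exact hf0
    · have hvδ : v ≤ δ := by rw [← hm]; exact hfle m
      have h1 := (hkey v (δ - (enumFun S (δ - v) - (δ - v))) hv hvδ).mpr le_rfl
      have h2 : δ - (enumFun S (δ - v) - (δ - v)) ≤ m := (hkey v m hv hvδ).mp hm.ge
      have h3 := hfmono _ m h2
      omega
  have hstrictanti : ∀ i j, 1 ≤ i → i < j → j ≤ d →
      enumFun S (δ - a j) - (δ - a j) < enumFun S (δ - a i) - (δ - a i) := by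
    intro i j hi1 hij hj2
    have hij' := hmono (Set.mem_Icc.mpr ⟨hi1, by omega⟩) (Set.mem_Icc.mpr ⟨by omega, hj2⟩) hij
    have hle' : enumFun S (δ - a j) - (δ - a j) ≤ enumFun S (δ - a i) - (δ - a i) :=
      hfmono _ _ (by omega)
    rcases lt_or_eq_of_le hle' with h | h
    · exact h
    · exfalso
      have e1 := hinv (a i) (hmem' i hi1 (by omega))
      have e2 := hinv (a j) (hmem' j (by omega) hj2)
      rw [← h] at e1
      omega
  have hσ : ∀ k, 1 ≤ k → k ≤ d →
      ∃ j, (1 ≤ j ∧ j ≤ d) ∧ a j = enumFun S (δ - a k) - (δ - a k) := by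
    intro k h1 h2
    obtain ⟨j, hj1, hj2, hj3⟩ := hmem _ ⟨δ - a k, rfl⟩
    exact ⟨j, ⟨hj1, hj2⟩, hj3⟩
  choose! σ hσ1 hσ2 using hσ
  have hσanti : ∀ i j, 1 ≤ i → i < j → j ≤ d → σ j < σ i := by
    intro i j hi1 hij hj2
    have h := hstrictanti i j hi1 hij hj2
    rw [← hσ2 i hi1 (by omega), ← hσ2 j (by omega) hj2] at h
    exact hlt_of_lt _ _ (hσ1 j (by omega) hj2).1 (hσ1 j (by omega) hj2).2
      (hσ1 i hi1 (by omega)).1 (hσ1 i hi1 (by omega)).2 h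
  have haux := antitone_aux σ d hσanti
  have hσval : ∀ k, 1 ≤ k → k ≤ d → σ k = d + 1 - k := by
    intro k h1 h2
    have h3 := haux k d h1 h2 le_rfl
    have h4 := haux 1 k le_rfl h1 h2
    have h5 := hσ1 d hd1 le_rfl
    have h6 := hσ1 1 le_rfl hd1
    have h7 := hσ1 k h1 h2
    omega
  have hφ : ∀ k, 1 ≤ k → k ≤ d →
      enumFun S (δ - a k) - (δ - a k) = a (d + 1 - k) := by
    intro k h1 h2
    rw [← hσ2 k h1 h2, hσval k h1 h2]
  -- conclusion
  refine ⟨?_, ?_⟩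
  · intro k hk1 hk2 n hn1 hn2
    have hd2 : 2 ≤ d := by omega
    have hk1d : k ≤ d := by omega
    have hlow : a k ≤ enumFun S n - n := by
      rcases eq_or_lt_of_le hk1 with h | h
      · rw [← h, ha1]
        omega
      · have hak1 : 1 ≤ a k := by
          have := hmono (Set.mem_Icc.mpr ⟨le_rfl, hd1⟩) (Set.mem_Icc.mpr ⟨hk1, hk1d⟩) h
          omega
        apply (hkey (a k) n hak1 (haled k hk1 hk1d)).mpr
        rw [hφ k hk1 hk1d]
        exact hn1
    have hupp : enumFun S n - n < a (k + 1) := by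
      have hk2' : k + 1 ≤ d := by omega
      have hak1 : 1 ≤ a (k + 1) := by
        have := hmono (Set.mem_Icc.mpr ⟨le_rfl, hd1⟩) (Set.mem_Icc.mpr ⟨by omega, hk2'⟩)
          (by omega)
        omega
      by_contra hcon
      push_neg at hcon
      have h1 := (hkey (a (k + 1)) n hak1 (haled _ (by omega) hk2')).mp hcon
      rw [hφ (k + 1) (by omega) hk2'] at h1
      omega
    obtain ⟨j, hj1, hj2, hj3⟩ := hmem (enumFun S n - n) ⟨n, rfl⟩
    have hjk : k ≤ j := by
      by_contra hcon
      push_neg at hcon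
      have := hmono (Set.mem_Icc.mpr ⟨hj1, hj2⟩) (Set.mem_Icc.mpr ⟨hk1, hk1d⟩) (by omega)
      omega
    have hjk2 : j < k + 1 := by
      by_contra hcon
      push_neg at hcon
      have := hamono (Set.mem_Icc.mpr ⟨by omega, by omega⟩) (Set.mem_Icc.mpr ⟨hj1, hj2⟩) hcon
      omega
    have hjeq : j = k := by omega
    rw [← hj3, hjeq]
  · intro n hn
    rw [ha1, Nat.sub_zero] at hn
    rw [hfδ n hn, had]
end

section
/- Let T ⊆ ℕ be a symmetric cofinite set with 0 ∈ T and genus δ_T; let a_1 < a_2 < … < a_d be the elements of the image of the function n ↦ Γ_T(n) − n, and set a'_k = δ_T − a_{d+1−k} for k = 1, …, d. Let S ⊆ ℕ be any cofinite set with 0 ∈ S. Then, working in ℤ, max over n ∈ ℕ of (Γ_T(n) − Γ_S(n)) exists (is attained) and max_{1 ≤ k ≤ d} (a_k + a'_k − Γ_S(a'_k)) = max_{n ∈ ℕ} (Γ_T(n) − Γ_S(n)). (This is the combinatorial identity underlying the formula ν⁺(K#\bar{L}) = max{g(K) − g(L) + max_n(Γ_L(n) − Γ_K(n)), 0} for L-space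 knots.) -/
private lemma staircase5 {f : ℕ → ℕ} {d : ℕ} (hf : StrictAntiOn f (Set.Icc 1 d)) :
    ∀ i j, 1 ≤ i → j ≤ d → i ≤ j → f j + (j - i) ≤ f i := by
  intro i j hi hj hij
  induction j, hij using Nat.le_induction with
  | base => omega
  | succ n hn ih =>
    have h1 : f (n + 1) < f n := by
      refine hf ?_ ?_ (Nat.lt_succ_self n) <;> constructor <;> omega
    have h2 := ih (by omega)
    omega

private lemma antitone_self_map5 {f : ℕ → ℕ} {d : ℕ}
    (hmem : ∀ k, 1 ≤ k → k ≤ d → 1 ≤ f k ∧ f k ≤ d)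
    (hf : StrictAntiOn f (Set.Icc 1 d)) {k : ℕ} (hk1 : 1 ≤ k) (hkd : k ≤ d) :
    f k = d + 1 - k := by
  have h1 := staircase5 hf 1 k (by omega) hkd hk1
  have h2 := staircase5 hf k d hk1 (le_refl d) hkd
  have h3 := hmem 1 (by omega) (by omega)
  have h4 := hmem d (by omega) (le_refl d)
  omega

/-- Let `T` be symmetric cofinite with `a 1 < ⋯ < a d` the image of `n ↦ Γ_T(n) − n`
and `a'_k = δ_T − a (d+1−k)`; let `S` be cofinite. Then, in `ℤ`, the maximum of
`Γ_T(n) − Γ_S(n)` over `n ∈ ℕ` is attained and equals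
`max_{1 ≤ k ≤ d} (a_k + a'_k − Γ_S(a'_k))`. -/
theorem stmt5 (T : Set ℕ) (hT : Tᶜ.Finite) (h0T : 0 ∈ T) (hsym : IsSymmetricSet T)
    (d : ℕ) (hd : 1 ≤ d) (a : ℕ → ℕ) (hmono : StrictMonoOn a (Set.Icc 1 d))
    (himg : a '' Set.Icc 1 d = Set.range (fun n => enumFun T n - n))
    (S : Set ℕ) (hS : Sᶜ.Finite) (h0S : 0 ∈ S) :
    IsGreatest (Set.range fun n : ℕ => (enumFun T n : ℤ) - (enumFun S n : ℤ))
      ((Finset.Icc 1 d).sup' (Finset.nonempty_Icc.mpr hd) fun k =>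
        (a k : ℤ) + ((genus T - a (d + 1 - k) : ℕ) : ℤ)
          - (enumFun S (genus T - a (d + 1 - k)) : ℤ)) := by
  classical
  set δ := genus T with hδdef
  set g : ℕ → ℕ := fun n => enumFun T n - n with hgdef
  have hTinf : (setOf (· ∈ T)).Infinite := by
    have := hT.infinite_compl
    exact (by simpa using this : T.Infinite)
  have hSinf : (setOf (· ∈ S)).Infinite := by
    have := hS.infinite_compl
    exact (by simpa using this : S.Infinite)
  have hqfin : (setOf (· ∉ T)).Finite := hT
  -- basic enumFun facts for T
  have hΓ0 : enumFun T 0 = 0 := Nat.nth_zero_of_zero h0T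
  have hΓmono : StrictMono (enumFun T) := Nat.nth_strictMono hTinf
  have hid : ∀ n, n ≤ enumFun T n := fun n => hΓmono.le_apply
  have hg : ∀ n, enumFun T n = n + g n := by
    intro n
    have := hid n
    simp only [hgdef]
    omega
  have hg0 : g 0 = 0 := by simp [hgdef, hΓ0]
  have hcountT : ∀ n, Nat.count (· ∈ T) (enumFun T n) = n :=
    Nat.count_nth_of_infinite hTinf
  have hsplit : ∀ m, Nat.count (· ∈ T) m + Nat.count (· ∉ T) m = m := by
    intro m
    induction m with
    | zero => simp
    | succ n ih =>
      rw [Nat.count_succ, Nat.count_succ]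
      by_cases h : n ∈ T
      · rw [if_pos h, if_neg (show ¬ n ∉ T from not_not_intro h)]; omega
      · rw [if_neg h, if_pos (show n ∉ T from h)]; omega
  have hcard : hqfin.toFinset.card = δ := by
    rw [hδdef, genus, Set.ncard_eq_toFinset_card _ hT]
    rfl
  have hcntle : ∀ m, Nat.count (· ∉ T) m ≤ δ := by
    intro m
    have := Nat.count_le_card hqfin m
    exact le_trans this (le_of_eq hcard)
  -- key counting equivalence (i)
  have keyi : ∀ n c : ℕ, c ≤ g n ↔ c ≤ Nat.count (· ∉ T) (n + c) := by
    intro n c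
    have h0 : Nat.count (· ∈ T) (n + c) ≤ n ↔ n + c ≤ enumFun T n :=
      Nat.count_le_iff_le_nth hTinf
    have h2 := hsplit (n + c)
    have h3 := hg n
    constructor
    · intro h
      have h4 := h0.mpr (by omega)
      omega
    · intro h
      have h4 := h0.mp (by omega)
      omega
  -- g is monotone
  have hgmono : Monotone g := by
    apply monotone_nat_of_le_succ
    intro n
    have h1 : enumFun T n < enumFun T (n + 1) := hΓmono (by omega)
    have h2 := hg n
    have h3 := hg (n + 1)
    omega
  have hgle : ∀ n, g n ≤ δ := by
    intro n
    exact le_trans ((keyi n (g n)).mp le_rfl) (hcntle _)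
  -- symmetry: reflection bijection
  have step9 : ∀ m, m ≤ 2 * δ → Nat.count (· ∈ T) m
      = ((Finset.Ico (2 * δ - m) (2 * δ)).filter (· ∉ T)).card := by
    intro m hm
    rw [Nat.count_eq_card_filter_range]
    apply Finset.card_nbij' (i := fun x => 2 * δ - 1 - x) (j := fun x => 2 * δ - 1 - x)
    · intro x hx
      simp only [Finset.mem_coe, Finset.mem_filter, Finset.mem_range] at hx
      obtain ⟨hx1, hx2⟩ := hx
      have hx3 : x ≤ 2 * genus T - 1 := by rw [← hδdef]; omega
      have := (hsym x hx3).mp hx2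
      simp only [Finset.mem_coe, Finset.mem_filter, Finset.mem_Ico]
      refine ⟨⟨by omega, by omega⟩, ?_⟩
      rw [← hδdef] at this
      exact this
    · intro y hy
      simp only [Finset.mem_coe, Finset.mem_filter, Finset.mem_Ico] at hy
      obtain ⟨⟨hy1, hy2⟩, hy3⟩ := hy
      simp only [Finset.mem_coe, Finset.mem_filter, Finset.mem_range]
      have hx3 : 2 * δ - 1 - y ≤ 2 * genus T - 1 := by rw [← hδdef]; omega
      constructor
      · omega
      · have := (hsym _ hx3).mpr
        rw [← hδdef] at this
        apply this
        have hyy : 2 * δ - 1 - (2 * δ - 1 - y) = y := by omega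
        rw [hyy]
        exact hy3
    · intro x hx
      simp only [Finset.mem_coe, Finset.mem_filter, Finset.mem_range] at hx
      dsimp only
      omega
    · intro y hy
      simp only [Finset.mem_coe, Finset.mem_filter, Finset.mem_Ico] at hy
      dsimp only
      omega
  -- count of gaps below 2δ is δ
  have step10 : Nat.count (· ∉ T) (2 * δ) = δ := by
    have h1 := step9 (2 * δ) le_rfl
    have h2 := hsplit (2 * δ)
    simp only [Nat.sub_self] at h1
    rw [← Finset.range_eq_Ico, ← Nat.count_eq_card_filter_range] at h1
    omega
  have cnt_ge : ∀ m, 2 * δ ≤ m → Nat.count (· ∉ T) m = δ := by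
    intro m hm
    have h1 : Nat.count (· ∉ T) (2 * δ) ≤ Nat.count (· ∉ T) m := Nat.count_monotone _ hm
    have := hcntle m
    omega
  -- the splitting of counts
  have hsplit2 : ∀ m, m ≤ 2 * δ →
      Nat.count (· ∉ T) (2 * δ) = Nat.count (· ∉ T) (2 * δ - m)
        + ((Finset.Ico (2 * δ - m) (2 * δ)).filter (· ∉ T)).card := by
    intro m hm
    rw [Nat.count_eq_card_filter_range, Nat.count_eq_card_filter_range,
      Finset.range_eq_Ico,
      ← Finset.Ico_union_Ico_eq_Ico (Nat.zero_le (2 * δ - m)) (by omega : 2 * δ - m ≤ 2 * δ),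
      Finset.filter_union, Finset.card_union_of_disjoint]
    · rw [Finset.range_eq_Ico]
    exact Finset.disjoint_filter_filter (Finset.Ico_disjoint_Ico_consecutive 0 (2 * δ - m) (2 * δ))
  -- DUAL0
  have dual0 : ∀ m, m ≤ 2 * δ → Nat.count (· ∉ T) (2 * δ - m) + m = δ + Nat.count (· ∉ T) m := by
    intro m hm
    have h1 := step9 m hm
    have h2 := hsplit2 m hm
    have h3 := hsplit m
    omega
  -- g n = δ for n ≥ δ
  have hgδ : g δ = δ := by
    have h1 := (keyi δ δ).mpr
    have h2 : Nat.count (· ∉ T) (δ + δ) = δ := cnt_ge _ (by omega)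
    have := hgle δ
    have := h1 (by omega)
    omega
  have hgbig : ∀ n, δ ≤ n → g n = δ := by
    intro n hn
    have := hgmono hn
    have := hgle n
    omega
  -- MIN characterization
  have hMIN : ∀ c n, 1 ≤ c → c ≤ δ → (c ≤ g n ↔ δ - g (δ - c) ≤ n) := by
    intro c n hc1 hcδ
    rcases le_or_gt δ n with hn | hn
    · constructor
      · intro _; omega
      · intro _; rw [hgbig n hn]; omega
    · have h1 := keyi n c
      have h2 := keyi (δ - c) (δ - n)
      have h3 : (δ - c) + (δ - n) = 2 * δ - (n + c) := by omega
      rw [h3] at h2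
      have h4 := dual0 (n + c) (by omega)
      have h5 := Nat.count_le (p := (· ∉ T)) (n := n + c)
      have h6 := hgle (δ - c)
      constructor
      · intro h
        have := h1.mp h
        have := h2.mpr (by omega)
        omega
      · intro h
        apply h1.mpr
        have := h2.mp (by omega)
        omega
  -- facts about a
  have hA1 : ∀ k, 1 ≤ k → k ≤ d → ∃ n, g n = a k := by
    intro k hk1 hkd
    have : a k ∈ a '' Set.Icc 1 d := Set.mem_image_of_mem a ⟨hk1, hkd⟩
    rw [himg] at this
    obtain ⟨n, hn⟩ := this
    exact ⟨n, hn⟩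
  have hA2 : ∀ n, ∃ k, 1 ≤ k ∧ k ≤ d ∧ a k = g n := by
    intro n
    have : g n ∈ Set.range (fun n => enumFun T n - n) := ⟨n, rfl⟩
    rw [← himg] at this
    obtain ⟨k, hk, hak⟩ := this
    exact ⟨k, hk.1, hk.2, hak⟩
  have hmonole : ∀ j k, 1 ≤ j → j ≤ k → k ≤ d → a j ≤ a k := by
    intro j k h1 h2 h3
    rcases eq_or_lt_of_le h2 with h | h
    · rw [h]
    · exact le_of_lt (hmono ⟨h1, by omega⟩ ⟨by omega, h3⟩ h)
  have ha1 : a 1 = 0 := by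
    obtain ⟨k, hk1, hkd, hak⟩ := hA2 0
    rw [hg0] at hak
    have := hmonole 1 k le_rfl hk1 hkd
    omega
  have had : a d = δ := by
    obtain ⟨k, hk1, hkd, hak⟩ := hA2 δ
    rw [hgδ] at hak
    have h1 := hmonole k d hk1 hkd le_rfl
    obtain ⟨n, hn⟩ := hA1 d hd le_rfl
    have h2 := hgle n
    omega
  have hakle : ∀ k, 1 ≤ k → k ≤ d → a k ≤ δ := by
    intro k hk1 hkd
    obtain ⟨n, hn⟩ := hA1 k hk1 hkd
    have := hgle n
    omega
  have hakpos : ∀ k, 2 ≤ k → k ≤ d → 1 ≤ a k := by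
    intro k hk2 hkd
    have := hmono (Set.mem_Icc.mpr ⟨le_rfl, by omega⟩) (Set.mem_Icc.mpr ⟨by omega, hkd⟩)
      (by omega : 1 < k)
    omega
  -- θ k = g (δ - a k); strict antitonicity
  have hθanti : StrictAntiOn (fun k => g (δ - a k)) (Set.Icc 1 d) := by
    intro k hk k' hk' hkk
    simp only [Set.mem_Icc] at hk hk'
    show g (δ - a k') < g (δ - a k)
    have hθle : g (δ - a k') ≤ δ := hgle _
    have hθle2 : g (δ - a k) ≤ δ := hgle _
    have hak'pos : 1 ≤ a k' := hakpos k' (by omega) hk'.2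
    have hak'le : a k' ≤ δ := hakle k' (by omega) hk'.2
    have hmin' := hMIN (a k') 0 hak'pos hak'le
    have hnot : ¬ (a k' ≤ g 0) := by
      rw [hg0]; omega
    have h0 : 0 < δ - g (δ - a k') := by
      by_contra h
      exact hnot (hmin'.mpr (by omega))
    rcases eq_or_lt_of_le hk.1 with h1 | h1
    · -- k = 1
      have : a k = 0 := by rw [← h1, ha1]
      rw [this, Nat.sub_zero, hgδ]
      omega
    · -- k ≥ 2
      have hakpos' : 1 ≤ a k := hakpos k (by omega) hk.2
      have hakle' : a k ≤ δ := hakle k (by omega) hk.2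
      obtain ⟨n₀, hn₀⟩ := hA1 k (by omega) hk.2
      have h2 := (hMIN (a k) n₀ hakpos' hakle').mp (le_of_eq hn₀.symm)
      have h3 : ¬ (a k' ≤ g n₀) := by
        rw [hn₀]
        have := hmono (Set.mem_Icc.mpr hk) (Set.mem_Icc.mpr hk') hkk
        omega
      have h4 : n₀ < δ - g (δ - a k') := by
        by_contra h
        exact h3 ((hMIN (a k') n₀ hak'pos hak'le).mpr (by omega))
      omega
  -- KEY: g (δ - a k) = a (d + 1 - k)
  have key19 : ∀ k, 1 ≤ k → k ≤ d → g (δ - a k) = a (d + 1 - k) := by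
    have hJex : ∀ k, ∃ j, (1 ≤ k ∧ k ≤ d) →
        (1 ≤ j ∧ j ≤ d ∧ a j = g (δ - a k)) := by
      intro k
      by_cases h : 1 ≤ k ∧ k ≤ d
      · obtain ⟨j, hj1, hj2, hj3⟩ := hA2 (δ - a k)
        exact ⟨j, fun _ => ⟨hj1, hj2, hj3⟩⟩
      · exact ⟨1, fun hh => absurd hh h⟩
    choose J hJ using hJex
    have hJmem : ∀ k, 1 ≤ k → k ≤ d → 1 ≤ J k ∧ J k ≤ d := by
      intro k h1 h2
      exact ⟨(hJ k ⟨h1, h2⟩).1, (hJ k ⟨h1, h2⟩).2.1⟩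
    have hJanti : StrictAntiOn J (Set.Icc 1 d) := by
      intro k hk k' hk' hkk
      simp only [Set.mem_Icc] at hk hk'
      have h1 := (hJ k hk).2.2
      have h2 := (hJ k' hk').2.2
      have h3 : g (δ - a k') < g (δ - a k) :=
        hθanti (Set.mem_Icc.mpr hk) (Set.mem_Icc.mpr hk') hkk
      rw [← h1, ← h2] at h3
      -- a (J k') < a (J k) implies J k' < J k
      by_contra h
      push_neg at h
      have := hmonole (J k) (J k') (hJmem k hk.1 hk.2).1 h (hJmem k' hk'.1 hk'.2).2
      omega
    intro k hk1 hkd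
    have := antitone_self_map5 hJmem hJanti hk1 hkd
    have h1 := (hJ k ⟨hk1, hkd⟩).2.2
    rw [this] at h1
    exact h1.symm
  -- S-side basics
  have hΓS0 : enumFun S 0 = 0 := Nat.nth_zero_of_zero h0S
  have hΓSmono : StrictMono (enumFun S) := Nat.nth_strictMono hSinf
  have hSid : ∀ n, n ≤ enumFun S n := fun n => hΓSmono.le_apply
  have hgSmono : Monotone (fun n => enumFun S n - n) := by
    apply monotone_nat_of_le_succ
    intro n
    have h1 : enumFun S n < enumFun S (n + 1) := hΓSmono (by omega)
    have h2 := hSid n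
    have h3 := hSid (n + 1)
    show enumFun S n - n ≤ enumFun S (n + 1) - (n + 1)
    omega
  have hgS : ∀ n' n, n' ≤ n → enumFun S n' + n ≤ enumFun S n + n' := by
    intro n' n h
    have h1 : enumFun S n' - n' ≤ enumFun S n - n := hgSmono h
    have h2 := hSid n'
    have h3 := hSid n
    omega
  constructor
  · -- membership
    obtain ⟨k₀, hk₀mem, hk₀⟩ := Finset.exists_mem_eq_sup' (Finset.nonempty_Icc.mpr hd)
      (fun k => (a k : ℤ) + ((δ - a (d + 1 - k) : ℕ) : ℤ)
        - (enumFun S (δ - a (d + 1 - k)) : ℤ))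
    rw [hk₀]
    simp only [Finset.mem_Icc] at hk₀mem
    refine ⟨δ - a (d + 1 - k₀), ?_⟩
    have hkk : 1 ≤ d + 1 - k₀ ∧ d + 1 - k₀ ≤ d := by omega
    have h1 := key19 (d + 1 - k₀) hkk.1 hkk.2
    have h2 : d + 1 - (d + 1 - k₀) = k₀ := by omega
    rw [h2] at h1
    have h3 := hg (δ - a (d + 1 - k₀))
    rw [h1] at h3
    show (enumFun T (δ - a (d + 1 - k₀)) : ℤ) - (enumFun S (δ - a (d + 1 - k₀)) : ℤ) = _
    rw [h3]
    push_cast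
    ring
  · -- upper bound
    rintro x ⟨n, rfl⟩
    obtain ⟨k, hk1, hkd, hak⟩ := hA2 n
    have hn' : δ - a (d + 1 - k) ≤ n := by
      rcases eq_or_lt_of_le hk1 with h1 | h1
      · have : d + 1 - k = d := by omega
        rw [this, had]
        omega
      · have hkk : 1 ≤ d + 1 - k ∧ d + 1 - k ≤ d := by omega
        have h2 := key19 k (by omega) hkd
        have h3 := (hMIN (a k) n (hakpos k (by omega) hkd) (hakle k (by omega) hkd)).mp
          (le_of_eq hak)
        rw [h2] at h3
        exact h3
    have hgn := hg n
    rw [← hak] at hgn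
    have hterm : (enumFun T n : ℤ) - (enumFun S n : ℤ)
        ≤ (a k : ℤ) + ((δ - a (d + 1 - k) : ℕ) : ℤ)
          - (enumFun S (δ - a (d + 1 - k)) : ℤ) := by
      have h4 := hgS (δ - a (d + 1 - k)) n hn'
      have h5 : enumFun T n = n + a k := hgn
      push_cast [h5]
      push_cast at h4 ⊢
      omega
    refine le_trans hterm ?_
    exact Finset.le_sup' (f := fun k => (a k : ℤ) + ((δ - a (d + 1 - k) : ℕ) : ℤ)
      - (enumFun S (δ - a (d + 1 - k)) : ℤ)) (Finset.mem_Icc.mpr ⟨hk1, hkd⟩)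
end

section
/- Let q, r, p be integers with 2 ≤ q < r, gcd(q, r) = 1, p ≥ 2qr − 1, gcd(p, 2qr) = 1, and gcd(p+2, 2qr) = 1. Let δ_T = #(ℕ \ ⟨q, r⟩) and let S = ⟨q(p+2), rp⟩ ⊆ ℕ. Then S is cofinite and its enumerating function satisfies Γ_S(δ_T + q − 1) = (q−1)rp and Γ_S(δ_T + r − 1) = (r−1)q(p+2). -/
/-- The numerical semigroup `⟨x, y⟩ = {i·x + j·y : i, j ∈ ℕ}` as a subset of `ℕ`. -/
def gen2 (x y : ℕ) : Set ℕ := {n | ∃ i j : ℕ, n = i * x + j * y}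

noncomputable instance gen2Dec (x y : ℕ) : DecidablePred (· ∈ gen2 x y) :=
  fun _ => Classical.dec _

lemma gen2_comm (x y : ℕ) : gen2 x y = gen2 y x := by
  ext n; constructor <;> rintro ⟨i, j, rfl⟩ <;> exact ⟨j, i, by ring⟩

lemma mem_gen2_of_ge {a b m : ℕ} (hab : Nat.Coprime a b) (hb : 0 < b)
    (hm : a * b ≤ m) : m ∈ gen2 a b := by
  haveI : NeZero b := ⟨hb.ne'⟩
  set i : ℕ := ((m : ZMod b) * (a : ZMod b)⁻¹).val with hi
  have hilt : i < b := ZMod.val_lt _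
  have hia : i * a ≤ m := by
    calc i * a ≤ (b-1) * a := Nat.mul_le_mul_right _ (by omega)
    _ ≤ a * b := by rw [mul_comm]; exact Nat.mul_le_mul_left _ (by omega)
    _ ≤ m := hm
  have hdvd : b ∣ m - i * a := by
    rw [← ZMod.natCast_eq_zero_iff]
    push_cast [Nat.cast_sub hia]
    rw [hi, ZMod.natCast_zmod_val]
    have h1 : (a : ZMod b) * (a : ZMod b)⁻¹ = 1 := ZMod.coe_mul_inv_eq_one _ hab
    calc (m : ZMod b) - (m : ZMod b) * (a : ZMod b)⁻¹ * a
        = (m : ZMod b) - (m : ZMod b) * ((a : ZMod b) * (a : ZMod b)⁻¹) := by ring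
      _ = 0 := by rw [h1]; ring
  obtain ⟨j, hj⟩ := hdvd
  rw [mul_comm b j] at hj
  exact ⟨i, j, by omega⟩

lemma gen2_inj {a b : ℕ} (hab : Nat.Coprime a b) (i1 j1 i2 j2 : ℕ)
    (h1 : i1 < b) (h2 : i2 < b) (heq : i1*a + j1*b = i2*a + j2*b) : i1 = i2 ∧ j1 = j2 := by
  have hb : 0 < b := by omega
  have key : ∀ x1 y1 x2 y2 : ℕ, x1 ≤ x2 → x1 < b → x2 < b →
      x1*a + y1*b = x2*a + y2*b → x1 = x2 := by
    intro x1 y1 x2 y2 hle hx1 hx2 he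
    have hax : x1*a ≤ x2*a := Nat.mul_le_mul_right _ hle
    have e1 : (x2-x1)*a = x2*a - x1*a := Nat.sub_mul _ _ _
    have e2 : (y1-y2)*b = y1*b - y2*b := Nat.sub_mul _ _ _
    have hsub : (x2-x1)*a = (y1-y2)*b := by omega
    have hdvd : b ∣ (x2 - x1) * a := ⟨y1 - y2, by rw [hsub, mul_comm]⟩
    have hdd : b ∣ (x2 - x1) := (Nat.Coprime.dvd_of_dvd_mul_right (Nat.Coprime.symm hab) hdvd)
    rcases Nat.eq_zero_or_pos (x2 - x1) with h0 | h0
    · omega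
    · have := Nat.le_of_dvd h0 hdd
      omega
  have hii : i1 = i2 := by
    rcases le_total i1 i2 with h | h
    · exact key i1 j1 i2 j2 h h1 h2 heq
    · exact (key i2 j2 i1 j1 h h2 h1 heq.symm).symm
  subst hii
  refine ⟨rfl, Nat.eq_of_mul_eq_mul_right hb ?_⟩
  omega

lemma lt_ceil_iff {a x : ℕ} (ha : 0 < a) (i : ℕ) : i < (x + (a-1))/a ↔ i*a < x := by
  obtain ⟨a', rfl⟩ : ∃ a', a = a' + 1 := ⟨a - 1, by omega⟩
  rw [show a' + 1 - 1 = a' from rfl, Nat.lt_iff_add_one_le, Nat.le_div_iff_mul_le (by omega)]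
  have : (i+1) * (a'+1) = i*(a'+1) + (a'+1) := by ring
  omega

lemma ceil_eq {a x d : ℕ} (ha : 0 < a) (h1 : d*a < x) (h2 : x ≤ (d+1)*a) :
    (x + (a-1))/a = d+1 := by
  have e1 : (d+1)*a = d*a + a := by ring
  have e2 : (d+2)*a = d*a + a + a := by ring
  refine Nat.div_eq_of_lt_le (by omega) (by rw [show d+1+1 = d+2 from rfl]; omega)

lemma ceil_le {a b x : ℕ} (ha : 0 < a) (h : x ≤ a*b) : (x + (a-1))/a ≤ b := by
  rw [Nat.div_le_iff_le_mul_add_pred ha]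
  have : a * b ≤ b * a := by rw [mul_comm]
  omega

lemma count_gen2 (a b c : ℕ) (hab : Nat.Coprime a b) (ha : 0 < a) (hb : 0 < b) (hc : c ≤ a) :
    Nat.count (· ∈ gen2 a b) (c * b)
      = ∑ j ∈ Finset.range c, ((j + 1) * b + (a - 1)) / a := by
  rw [Nat.count_eq_card_filter_range]
  have hceil : ∀ j < c, ((c - j) * b + (a-1))/a ≤ b := by
    intro j hj
    exact ceil_le ha (Nat.mul_le_mul_right _ (by omega))
  have hmem : ∀ (i j : ℕ), j < c → i * a < (c - j) * b → i * a + j * b < c * b := by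
    intro i j hj hi
    have : (c - j) * b + j * b = c * b := by rw [← Nat.add_mul]; congr 1; omega
    omega
  have hE : {x ∈ Finset.range (c*b) | x ∈ gen2 a b}
      = (Finset.range c).biUnion
          (fun j => (Finset.range (((c - j) * b + (a-1))/a)).image (fun i => i * a + j * b)) := by
    ext m
    simp only [Finset.mem_filter, Finset.mem_range, Finset.mem_biUnion, Finset.mem_image]
    constructor
    · rintro ⟨hm, i, j, rfl⟩
      have hjb : j * b < c * b := by omega
      have hjc : j < c := Nat.lt_of_mul_lt_mul_right hjb
      set i0 := i % b with hi0
      set t := i / b with ht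
      have hdm : b * t + i0 = i := Nat.div_add_mod i b
      have hrep : i * a + j * b = i0 * a + (j + t * a) * b := by
        rw [← hdm]; ring
      have hj'b : (j + t * a) * b ≤ i * a + j * b := by rw [hrep]; omega
      have hj'c : j + t * a < c := by
        refine Nat.lt_of_mul_lt_mul_right (a := b) ?_
        calc (j + t*a) * b ≤ i * a + j * b := hj'b
          _ < c * b := hm
      refine ⟨j + t * a, hj'c, i0, ?_, hrep.symm⟩
      rw [lt_ceil_iff ha]
      have : (c - (j + t*a)) * b + (j + t*a) * b = c * b := by
        rw [← Nat.add_mul]; congr 1; omega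
      calc i0 * a = (i0 * a + (j + t*a) * b) - (j + t*a) * b := by omega
        _ = (i * a + j * b) - (j + t*a)*b := by rw [hrep]
        _ < c * b - (j + t*a)*b := by omega
        _ = (c - (j + t*a)) * b := by omega
    · rintro ⟨j, hj, i, hi, rfl⟩
      rw [lt_ceil_iff ha] at hi
      exact ⟨hmem i j hj hi, i, j, rfl⟩
  have hdisj : ∀ x ∈ Finset.range c, ∀ y ∈ Finset.range c, x ≠ y →
      Disjoint ((Finset.range (((c - x) * b + (a-1))/a)).image (fun i => i * a + x * b))
        ((Finset.range (((c - y) * b + (a-1))/a)).image (fun i => i * a + y * b)) := by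
    intro x hx y hy hxy
    rw [Finset.mem_range] at hx hy
    simp only [Finset.disjoint_left, Finset.mem_image, Finset.mem_range]
    rintro m ⟨i1, hi1, rfl⟩ ⟨i2, hi2, heq⟩
    rw [lt_ceil_iff ha] at hi1 hi2
    have hb1 : i1 < b := Nat.lt_of_mul_lt_mul_right (a := a) (by
      calc i1 * a < (c - x) * b := hi1
        _ ≤ a * b := Nat.mul_le_mul_right _ (by omega)
        _ = b * a := mul_comm _ _)
    have hb2 : i2 < b := Nat.lt_of_mul_lt_mul_right (a := a) (by
      calc i2 * a < (c - y) * b := hi2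
        _ ≤ a * b := Nat.mul_le_mul_right _ (by omega)
        _ = b * a := mul_comm _ _)
    exact hxy ((gen2_inj hab i1 x i2 y hb1 hb2 heq.symm).2)
  rw [hE, Finset.card_biUnion hdisj]
  have hcard : ∀ j ∈ Finset.range c,
      ((Finset.range (((c - j) * b + (a-1))/a)).image (fun i => i * a + j * b)).card
        = ((c - j) * b + (a-1))/a := by
    intro j _
    rw [Finset.card_image_of_injective _ (fun x y hxy =>
      Nat.eq_of_mul_eq_mul_right ha (by omega)), Finset.card_range]
  rw [Finset.sum_congr rfl hcard]
  rw [← Finset.sum_range_reflect (fun j => ((j + 1) * b + (a - 1)) / a) c]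
  apply Finset.sum_congr rfl
  intro j hj
  rw [Finset.mem_range] at hj
  have : c - 1 - j + 1 = c - j := by omega
  rw [this]

lemma div_pair_abs {a b x y : ℕ} (ha : 0 < a) (hxy : x + y = a*b)
    (hmx : x % a ≠ 0) : x/a + y/a = b - 1 := by
  have d1 := Nat.div_add_mod x a
  have d2 := Nat.div_add_mod y a
  have m1 : x % a < a := Nat.mod_lt _ ha
  have m2 : y % a < a := Nat.mod_lt _ ha
  have hsum : a * (x/a + y/a) + (x % a + y % a) = a * b := by
    rw [Nat.mul_add]; omega
  have hlt : x/a + y/a < b := by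
    refine Nat.lt_of_mul_lt_mul_left (a := a) ?_
    have : x % a ≥ 1 := by omega
    omega
  have hgt : b < x/a + y/a + 2 := by
    refine Nat.lt_of_mul_lt_mul_left (a := a) ?_
    have e : a * (x/a + y/a + 2) = a * (x/a + y/a) + 2*a := by ring
    omega
  have key : ∀ t, t < b → b < t + 2 → t = b - 1 := by intro t h1 h2; omega
  exact key _ hlt hgt

lemma pair_div {a b k : ℕ} (hab : Nat.Coprime a b) (hk1 : 1 ≤ k) (hk2 : k < a) :
    k*b/a + (a-k)*b/a = b - 1 := by
  have ha : 0 < a := by omega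
  refine div_pair_abs ha ?_ ?_
  · rw [← Nat.add_mul]
    congr 1
    omega
  · intro h
    have hdvd : a ∣ k * b := Nat.dvd_of_mod_eq_zero h
    have : a ∣ k := (Nat.Coprime.dvd_of_dvd_mul_right hab hdvd)
    have := Nat.le_of_dvd (by omega) this
    omega

lemma recip {a b : ℕ} (hab : Nat.Coprime a b) :
    (∑ j ∈ Finset.range (a-1), (j+1)*b/a) * 2 = (a-1)*(b-1) := by
  rcases Nat.lt_or_ge a 2 with h | h
  · interval_cases a <;> simp
  · have hb : 1 ≤ b := by
      rcases Nat.eq_zero_or_pos b with rfl | h1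
      · simp [Nat.Coprime] at hab; omega
      · exact h1
    have hrefl := Finset.sum_range_reflect (fun j => (j+1)*b/a) (a-1)
    calc (∑ j ∈ Finset.range (a-1), (j+1)*b/a) * 2
        = (∑ j ∈ Finset.range (a-1), (j+1)*b/a)
          + (∑ j ∈ Finset.range (a-1), (a-1-1-j+1)*b/a) := by rw [hrefl]; ring
      _ = ∑ j ∈ Finset.range (a-1), ((j+1)*b/a + (a-(j+1))*b/a) := by
          rw [← Finset.sum_add_distrib]
          apply Finset.sum_congr rfl
          intro j hj
          rw [Finset.mem_range] at hj
          have : a - 1 - 1 - j + 1 = a - (j+1) := by omega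
          rw [this]
      _ = ∑ j ∈ Finset.range (a-1), (b-1) := by
          apply Finset.sum_congr rfl
          intro j hj
          rw [Finset.mem_range] at hj
          exact pair_div hab (by omega) (by omega)
      _ = (a-1)*(b-1) := by rw [Finset.sum_const, Finset.card_range, smul_eq_mul]

lemma mod_ne_zero {q r k : ℕ} (hcop : Nat.Coprime q r) (h1 : 1 ≤ k) (h2 : k < q) :
    k * r % q ≠ 0 := by
  intro h
  have hdvd : q ∣ k * r := Nat.dvd_of_mod_eq_zero h
  have : q ∣ k := Nat.Coprime.dvd_of_dvd_mul_right hcop hdvd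
  have := Nat.le_of_dvd (by omega) this
  omega

lemma term_T {q r k : ℕ} (hcop : Nat.Coprime q r) (h1 : 1 ≤ k) (h2 : k < q) :
    (k*r + (q-1))/q = k*r/q + 1 := by
  have hq : 0 < q := by omega
  have hdm := Nat.div_add_mod (k*r) q
  have hs := mod_ne_zero hcop h1 h2
  have hslt : k*r % q < q := Nat.mod_lt _ hq
  refine ceil_eq hq ?_ ?_
  · have e : (k*r/q)*q = q*(k*r/q) := Nat.mul_comm _ _
    omega
  · have e : (k*r/q + 1)*q = q*(k*r/q) + q := by ring
    omega

lemma term_T_top {q r : ℕ} (hq : 0 < q) : (q*r + (q-1))/q = r := by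
  rcases Nat.eq_zero_or_pos r with rfl | hr
  · simp only [Nat.mul_zero, Nat.zero_add]
    exact Nat.div_eq_of_lt (by omega)
  · have : (q*r + (q-1))/q = (r-1) + 1 := by
      refine ceil_eq hq ?_ ?_
      · have e : (r-1)*q + q = r * q := by
          rw [← Nat.succ_mul]; congr 1; omega
        have e2 : r*q = q*r := Nat.mul_comm _ _
        omega
      · have e : (r-1+1)*q = r*q := by congr 1; omega
        have e2 : r*q = q*r := Nat.mul_comm _ _
        omega
    omega

lemma term1 {q r p k : ℕ} (hq : 2 ≤ q) (hqr : q < r) (hcop : Nat.Coprime q r)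
    (hp : 2*(q*r) ≤ p + 1) (h1 : 1 ≤ k) (h2 : k < q) :
    (k*(r*p) + (q*(p+2) - 1))/(q*(p+2)) = k*r/q + 1 := by
  set d := k*r/q with hd
  set s := k*r % q with hs0
  have hdm : q*d + s = k*r := Nat.div_add_mod (k*r) q
  have hs : s ≠ 0 := mod_ne_zero hcop h1 h2
  have hslt : s < q := Nat.mod_lt _ (by omega)
  have hA : 0 < q*(p+2) := Nat.mul_pos (by omega) (by omega)
  have hkr : k*r ≤ (q-1)*r := Nat.mul_le_mul_right _ (by omega)
  have hqr' : (q-1)*r + r = q*r := by rw [← Nat.succ_mul]; congr 1; omega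
  have hplarge : 3 ≤ r := by omega
  have hrep : k*(r*p) = q*d*p + s*p := by
    calc k*(r*p) = (k*r)*p := by ring
      _ = (q*d+s)*p := by rw [hdm]
      _ = q*d*p + s*p := by ring
  refine ceil_eq hA ?_ ?_
  · have hsp : p ≤ s*p := Nat.le_mul_of_pos_left p (by omega)
    have hmain : 2*(q*d) < s*p := by omega
    calc d*(q*(p+2)) = q*d*p + 2*(q*d) := by ring
      _ < q*d*p + s*p := Nat.add_lt_add_left hmain _
      _ = k*(r*p) := hrep.symm
  · have hsq : s*p ≤ q*p := Nat.mul_le_mul_right _ (by omega)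
    calc k*(r*p) = q*d*p + s*p := hrep
      _ ≤ q*d*p + q*p := Nat.add_le_add_left hsq _
      _ ≤ q*d*p + 2*(q*d) + q*p + 2*q := by omega
      _ = (d+1)*(q*(p+2)) := by ring

lemma term2 {q r p k : ℕ} (hq : 2 ≤ q) (hqr : q < r) (hcop : Nat.Coprime q r)
    (hp : 2*(q*r) ≤ p + 1) (h1 : 1 ≤ k) (h2 : k < r) :
    (k*(q*(p+2)) + (r*p - 1))/(r*p) = k*q/r + 1 := by
  have hp0 : 0 < p := by
    have h6 : 2*3 ≤ q*r := Nat.mul_le_mul hq (by omega)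
    omega
  set d := k*q/r with hd
  set s := k*q % r with hs0
  have hdm : r*d + s = k*q := Nat.div_add_mod (k*q) r
  have hs : s ≠ 0 := mod_ne_zero hcop.symm h1 h2
  have hslt : s < r := Nat.mod_lt _ (by omega)
  have hB : 0 < r*p := Nat.mul_pos (by omega) hp0
  have hkq : k*q ≤ (r-1)*q := Nat.mul_le_mul_right _ (by omega)
  have hrq' : (r-1)*q + q = r*q := by rw [← Nat.succ_mul]; congr 1; omega
  have hcomm : r*q = q*r := Nat.mul_comm _ _
  have hrep : k*(q*(p+2)) = r*d*p + 2*(r*d) + s*p + 2*s := by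
    calc k*(q*(p+2)) = (k*q)*(p+2) := by ring
      _ = (r*d+s)*(p+2) := by rw [hdm]
      _ = r*d*p + 2*(r*d) + s*p + 2*s := by ring
  refine ceil_eq hB ?_ ?_
  · calc d*(r*p) = r*d*p := by ring
      _ < r*d*p + 2*(r*d) + s*p + 2*s := by
          have : 0 < s*p := Nat.mul_pos (by omega) hp0
          omega
      _ = k*(q*(p+2)) := hrep.symm
  · have hsp : s*p + p ≤ r*p := by
      have h1' : s*p ≤ (r-1)*p := Nat.mul_le_mul_right _ (by omega)
      have h2' : (r-1)*p + p = r*p := by rw [← Nat.succ_mul]; congr 1; omega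
      omega
    have hmain : 2*(r*d) + 2*s ≤ p := by omega
    calc k*(q*(p+2)) = r*d*p + 2*(r*d) + s*p + 2*s := hrep
      _ ≤ r*d*p + s*p + p := by omega
      _ ≤ r*d*p + r*p := by omega
      _ = (d+1)*(r*p) := by ring

/-- For `2 ≤ q < r` coprime, `p ≥ 2qr − 1` with `gcd(p, 2qr) = gcd(p+2, 2qr) = 1`,
`δ_T = #(ℕ \ ⟨q,r⟩)` and `S = ⟨q(p+2), rp⟩`: `S` is cofinite,
`Γ_S(δ_T + q − 1) = (q−1)rp` and `Γ_S(δ_T + r − 1) = (r−1)q(p+2)`. -/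
theorem stmt11 (q r p : ℕ) (hq : 2 ≤ q) (hqr : q < r) (hcop : Nat.gcd q r = 1)
    (hp : 2 * q * r - 1 ≤ p) (hp1 : Nat.gcd p (2 * q * r) = 1)
    (hp2 : Nat.gcd (p + 2) (2 * q * r) = 1) :
    ((gen2 (q * (p + 2)) (r * p))ᶜ).Finite ∧
    enumFun (gen2 (q * (p + 2)) (r * p)) (((gen2 q r)ᶜ).ncard + q - 1)
      = (q - 1) * (r * p) ∧
    enumFun (gen2 (q * (p + 2)) (r * p)) (((gen2 q r)ᶜ).ncard + r - 1)
      = (r - 1) * (q * (p + 2)) := by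
  have hr3 : 3 ≤ r := by omega
  have copqr : Nat.Coprime q r := hcop
  have h6 : 2*3 ≤ q*r := Nat.mul_le_mul hq (by omega)
  have hp' : 2*(q*r) ≤ p + 1 := by
    have e : 2*q*r = 2*(q*r) := by ring
    rw [e] at hp
    omega
  have hp0 : 0 < p := by omega
  have hp1' : Nat.Coprime p (2*q*r) := hp1
  have hp2' : Nat.Coprime (p+2) (2*q*r) := hp2
  have cpq : Nat.Coprime p q := Nat.Coprime.coprime_dvd_right ⟨2*r, by ring⟩ hp1'
  have cp2 : Nat.Coprime p 2 := Nat.Coprime.coprime_dvd_right ⟨q*r, by ring⟩ hp1'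
  have cp2r : Nat.Coprime (p+2) r := Nat.Coprime.coprime_dvd_right ⟨2*q, by ring⟩ hp2'
  have cp2p : Nat.Coprime (p+2) p := by
    have h2p : Nat.Coprime (2+p) p := (Nat.coprime_add_self_left).mpr cp2.symm
    rwa [Nat.add_comm] at h2p
  have copAB : Nat.Coprime (q*(p+2)) (r*p) :=
    Nat.Coprime.mul (Nat.Coprime.mul_right copqr cpq.symm)
      (Nat.Coprime.mul_right cp2r cp2p)
  have hA : 0 < q*(p+2) := Nat.mul_pos (by omega) (by omega)
  have hB : 0 < r*p := Nat.mul_pos (by omega) hp0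
  -- δ_T computation
  set G := ∑ j ∈ Finset.range (q-1), (j+1)*r/q with hG
  set G' := ∑ j ∈ Finset.range (r-1), (j+1)*q/r with hG'
  have hrecip : G * 2 = (q-1)*(r-1) := recip copqr
  have hrecip' : G' * 2 = (r-1)*(q-1) := recip copqr.symm
  have hmulcomm : (q-1)*(r-1) = (r-1)*(q-1) := Nat.mul_comm _ _
  have hqrExp : q*r = (q-1)*(r-1) + (q-1) + (r-1) + 1 := by
    have e1 : q-1+1 = q := by omega
    have e2 : r-1+1 = r := by omega
    calc q*r = (q-1+1)*(r-1+1) := by rw [e1, e2]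
      _ = (q-1)*(r-1) + (q-1) + (r-1) + 1 := by ring
  have hcountT : Nat.count (· ∈ gen2 q r) (q*r) = G + (q-1) + r := by
    rw [count_gen2 q r q copqr (by omega) (by omega) le_rfl]
    rw [show q = (q-1)+1 by omega, Finset.sum_range_succ]
    have hlast : ((q-1+1)*r + ((q-1)+1-1))/((q-1)+1) = r := by
      rw [show q-1+1 = q by omega]
      exact term_T_top (by omega)
    rw [hlast]
    have hterms : ∀ j ∈ Finset.range (q-1), ((j+1)*r + ((q-1)+1-1))/((q-1)+1) = (j+1)*r/q + 1 := by
      intro j hj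
      rw [Finset.mem_range] at hj
      rw [show q-1+1 = q by omega]
      exact term_T copqr (by omega) (by omega)
    rw [Finset.sum_congr rfl hterms, Finset.sum_add_distrib, Finset.sum_const,
      Finset.card_range, smul_eq_mul, mul_one]
    rw [show q-1+1 = q by omega]
  have hset : (gen2 q r)ᶜ
      = ↑((Finset.range (q*r)).filter (fun m => ¬ (m ∈ gen2 q r))) := by
    ext m
    simp only [Set.mem_compl_iff, Finset.coe_filter, Finset.mem_range, Set.mem_setOf_eq]
    constructor
    · intro hm
      refine ⟨?_, hm⟩
      by_contra h
      exact hm (mem_gen2_of_ge copqr (by omega) (by omega))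
    · tauto
  have hδ : ((gen2 q r)ᶜ).ncard = G := by
    rw [hset, Set.ncard_coe_finset]
    have hsplit := Finset.card_filter_add_card_filter_not
      (s := Finset.range (q*r)) (p := fun m => m ∈ gen2 q r)
    rw [Nat.count_eq_card_filter_range] at hcountT
    rw [Finset.card_range] at hsplit
    omega
  -- count for claim 1
  have hc1 : Nat.count (· ∈ gen2 (q*(p+2)) (r*p)) ((q-1)*(r*p)) = G + (q-1) := by
    have hcle : (q:ℕ) - 1 ≤ q*(p+2) := by
      have : q ≤ q*(p+2) := Nat.le_mul_of_pos_right q (by omega)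
      omega
    rw [count_gen2 (q*(p+2)) (r*p) (q-1) copAB hA hB hcle]
    have hterms : ∀ j ∈ Finset.range (q-1),
        ((j+1)*(r*p) + (q*(p+2)-1))/(q*(p+2)) = (j+1)*r/q + 1 := by
      intro j hj
      rw [Finset.mem_range] at hj
      exact term1 hq hqr copqr hp' (by omega) (by omega)
    rw [Finset.sum_congr rfl hterms, Finset.sum_add_distrib, Finset.sum_const,
      Finset.card_range, smul_eq_mul, mul_one]
  -- count for claim 2
  have hc2 : Nat.count (· ∈ gen2 (r*p) (q*(p+2))) ((r-1)*(q*(p+2))) = G' + (r-1) := by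
    have hcle : (r:ℕ) - 1 ≤ r*p := by
      have : r ≤ r*p := Nat.le_mul_of_pos_right r (by omega)
      omega
    rw [count_gen2 (r*p) (q*(p+2)) (r-1) copAB.symm hB hA hcle]
    have hterms : ∀ j ∈ Finset.range (r-1),
        ((j+1)*(q*(p+2)) + (r*p-1))/(r*p) = (j+1)*q/r + 1 := by
      intro j hj
      rw [Finset.mem_range] at hj
      exact term2 hq hqr copqr hp' (by omega) (by omega)
    rw [Finset.sum_congr rfl hterms, Finset.sum_add_distrib, Finset.sum_const,
      Finset.card_range, smul_eq_mul, mul_one]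
  refine ⟨?_, ?_, ?_⟩
  · refine Set.Finite.subset (Set.finite_Iio (q*(p+2)*(r*p))) ?_
    intro m hm
    simp only [Set.mem_compl_iff] at hm
    simp only [Set.mem_Iio]
    by_contra h
    push_neg at h
    exact hm (mem_gen2_of_ge copAB hB h)
  · have hmem1 : (q-1)*(r*p) ∈ gen2 (q*(p+2)) (r*p) := ⟨0, q-1, by ring⟩
    have hnth := Nat.nth_count (p := (· ∈ gen2 (q*(p+2)) (r*p))) hmem1
    rw [hc1] at hnth
    show Nat.nth (· ∈ gen2 (q*(p+2)) (r*p)) (((gen2 q r)ᶜ).ncard + q - 1) = (q - 1) * (r * p)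
    rw [hδ, show G + q - 1 = G + (q-1) by omega]
    exact hnth
  · have hmem2 : (r-1)*(q*(p+2)) ∈ gen2 (r*p) (q*(p+2)) := ⟨0, r-1, by ring⟩
    have hnth := Nat.nth_count (p := (· ∈ gen2 (r*p) (q*(p+2)))) hmem2
    rw [hc2] at hnth
    show Nat.nth (· ∈ gen2 (q*(p+2)) (r*p)) (((gen2 q r)ᶜ).ncard + r - 1) = (r - 1) * (q * (p + 2))
    rw [gen2_comm (q*(p+2)) (r*p), hδ, show G + r - 1 = G' + (r-1) by omega]
    exact hnth
end

section
/- Let q, r, p be integers with 2 ≤ q < r, gcd(q, r) = 1, p ≥ 2qr − 1, gcd(p, 2qr) = 1, and gcd(p+2, 2qr) = 1. Let δ_T = #(ℕ \ ⟨q, r⟩) and let S' = ⟨qp, r(p+2)⟩ ⊆ ℕ. Then S' is cofinite and its enumerating function satisfies Γ_{S'}(δ_T + q − 1) = (q−1)r(p+2) and Γ_{S'}(δ_T + r − 1) = (r−1)qp. -/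
lemma exists_rep {q r : ℕ} (hr : 0 < r) (hcop : Nat.Coprime q r) (n : ℕ) :
    ∃ i, i < r ∧ n ≡ i * q [MOD r] := by
  haveI : NeZero r := ⟨hr.ne'⟩
  set u := ZMod.unitOfCoprime q hcop with hu
  refine ⟨(((u⁻¹ : (ZMod r)ˣ) : ZMod r) * (n : ZMod r)).val, ZMod.val_lt _, ?_⟩
  rw [← ZMod.natCast_eq_natCast_iff]
  push_cast
  rw [ZMod.natCast_val, ZMod.cast_id]
  have hq : ((u : (ZMod r)ˣ) : ZMod r) = (q : ZMod r) := ZMod.coe_unitOfCoprime q hcop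
  rw [← hq, mul_assoc, mul_comm (n : ZMod r), ← mul_assoc]
  simp

lemma mem_of_dvd {q r n : ℕ} {i : ℕ} (h1 : i*q ≤ n) (h2 : r ∣ n - i*q) : n ∈ gen2 q r := by
  obtain ⟨k, hk⟩ := h2
  refine ⟨i, k, ?_⟩
  have : r * k = k * r := Nat.mul_comm r k
  omega

lemma mem_of_ge {q r : ℕ} (hr : 0 < r) (hcop : Nat.Coprime q r) {n : ℕ}
    (hn : (q-1)*(r-1) ≤ n) : n ∈ gen2 q r := by
  obtain ⟨i, hir, hmod⟩ := exists_rep hr hcop n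
  rcases le_or_gt (i*q) n with h | h
  · exact mem_of_dvd h ((Nat.modEq_iff_dvd' h).mp hmod.symm)
  · exfalso
    have hd : r ∣ i*q - n := (Nat.modEq_iff_dvd' h.le).mp hmod
    have hle := Nat.le_of_dvd (by omega) hd
    have h1 : i*q ≤ (r-1)*q := Nat.mul_le_mul_right q (by omega)
    have hq0 : 0 < q := by
      rcases Nat.eq_zero_or_pos q with h0 | h0
      · subst h0; simp at h
      · exact h0
    have hq1 : q - 1 + 1 = q := by omega
    have h2 : (q-1)*(r-1) + (r-1) = (r-1)*q := by
      calc (q-1)*(r-1) + (r-1) = (r-1)*((q-1)+1) := by ring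
        _ = (r-1)*q := by rw [hq1]
    omega

lemma gap_pair {q r : ℕ} (hr : 0 < r) (hcop : Nat.Coprime q r) {n m : ℕ}
    (hnm : n + m + q + r = q*r) (hn : n ∉ gen2 q r) : m ∈ gen2 q r := by
  obtain ⟨i, hir, hmod⟩ := exists_rep hr hcop n
  have h : n < i*q := by
    by_contra hc
    exact hn (mem_of_dvd (by omega) ((Nat.modEq_iff_dvd' (by omega)).mp hmod.symm))
  have hd : r ∣ i*q - n := (Nat.modEq_iff_dvd' h.le).mp hmod
  obtain ⟨c, hc⟩ := hd
  have hc1 : 1 ≤ c := by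
    rcases Nat.eq_zero_or_pos c with h0 | h0
    · exfalso; rw [h0, Nat.mul_zero] at hc; omega
    · exact h0
  have hiq : i*q = n + r*c := by omega
  obtain ⟨i', hi'⟩ : ∃ i', i' + i + 1 = r := ⟨r-1-i, by omega⟩
  obtain ⟨c', hcq⟩ : ∃ c', c' + 1 = c := ⟨c-1, by omega⟩
  refine ⟨i', c', ?_⟩
  have eA : r*q = i'*q + i*q + q := by rw [← hi']; ring
  have eB : r*c = r*c' + r := by rw [← hcq]; ring
  have eC : c'*r = r*c' := mul_comm _ _
  have eD : q*r = r*q := mul_comm _ _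
  omega

lemma F_notmem {q r : ℕ} (hq : 2 ≤ q) (hqr : q ≤ r) (hcop : Nat.Coprime q r) :
    q*r - q - r ∉ gen2 q r := by
  rintro ⟨i, j, hij⟩
  have hqrr : q + r ≤ q*r := by
    have : 2*r ≤ q*r := Nat.mul_le_mul_right r hq
    omega
  have e1 : (i+1)*q = i*q + q := by ring
  have e2 : (j+1)*r = j*r + r := by ring
  have heq : (i+1)*q + (j+1)*r = q*r := by omega
  have hj : j+1 ≤ q := by
    by_contra hc
    have : q*r < (j+1)*r := Nat.mul_lt_mul_of_lt_of_le (show q < j+1 by omega) (le_refl r) (by omega)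
    omega
  have e3 : (q-(j+1))*r = q*r - (j+1)*r := Nat.sub_mul _ _ _
  have e : (i+1)*q = (q-(j+1))*r := by omega
  have hdvd : r ∣ (i+1)*q := e ▸ dvd_mul_left r _
  have hri : r ∣ (i+1) := Nat.Coprime.dvd_of_dvd_mul_right hcop.symm hdvd
  have hle : r ≤ i+1 := Nat.le_of_dvd (by omega) hri
  have hge : r*q ≤ (i+1)*q := Nat.mul_le_mul_right q hle
  have hcomm : q*r = r*q := Nat.mul_comm q r
  omega

lemma gen2_add {q r : ℕ} {a b : ℕ} (ha : a ∈ gen2 q r) (hb : b ∈ gen2 q r) :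
    a + b ∈ gen2 q r := by
  obtain ⟨i, j, rfl⟩ := ha
  obtain ⟨i', j', rfl⟩ := hb
  exact ⟨i+i', j+j', by ring⟩

lemma gaps_card {q r : ℕ} (hr : 0 < r) (hcop : Nat.Coprime q r) {M : ℕ}
    (hM : (q-1)*(r-1) ≤ M) [DecidablePred (· ∈ gen2 q r)] :
    ((Finset.range M).filter (fun n => n ∉ gen2 q r)).card = ((gen2 q r)ᶜ).ncard := by
  have hset : ((gen2 q r)ᶜ : Set ℕ)
      = ↑((Finset.range M).filter (fun n => n ∉ gen2 q r)) := by
    ext n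
    simp only [Set.mem_compl_iff, Finset.coe_filter, Finset.mem_range, Set.mem_setOf_eq]
    constructor
    · intro hn
      refine ⟨?_, hn⟩
      by_contra hc
      exact hn (mem_of_ge hr hcop (by omega))
    · exact fun h => h.2
  rw [hset, Set.ncard_coe_finset]

lemma genus_s12 {q r : ℕ} (hq : 2 ≤ q) (hqr : q < r) (hcop : Nat.Coprime q r)
    [DecidablePred (· ∈ gen2 q r)] :
    2 * ((gen2 q r)ᶜ).ncard + q + r = q*r + 1 := by
  have hr : 0 < r := by omega
  have e : q*r = (q-1)*(r-1) + (q-1) + (r-1) + 1 := by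
    calc q*r = ((q-1)+1)*((r-1)+1) := by
          rw [show q-1+1 = q from by omega, show r-1+1 = r from by omega]
      _ = (q-1)*(r-1) + (q-1) + (r-1) + 1 := by ring
  have hNF : (q-1)*(r-1) + q + r = q*r + 1 := by omega
  set A := (Finset.range ((q-1)*(r-1))).filter (fun n => n ∉ gen2 q r) with hA
  set B := (Finset.range ((q-1)*(r-1))).filter (fun n => n ∈ gen2 q r) with hB
  have hcard : A.card = B.card := by
    refine Finset.card_bij (fun n _ => q*r - q - r - n) ?_ ?_ ?_
    · intro n hn
      simp only [hA, hB, Finset.mem_filter, Finset.mem_range] at hn ⊢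
      refine ⟨by omega, gap_pair hr hcop (by omega) hn.2⟩
    · intro n₁ h₁ n₂ h₂ heq
      simp only [hA, Finset.mem_filter, Finset.mem_range] at h₁ h₂
      have h₁' := h₁.1
      have h₂' := h₂.1
      omega
    · intro m hm
      simp only [hB, Finset.mem_filter, Finset.mem_range] at hm
      have hm1 := hm.1
      refine ⟨q*r - q - r - m, ?_, ?_⟩
      · simp only [hA, Finset.mem_filter, Finset.mem_range]
        refine ⟨by omega, fun hmem => ?_⟩
        have := gen2_add hm.2 hmem
        rw [show m + (q*r - q - r - m) = q*r - q - r from by omega] at this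
        exact F_notmem hq (by omega) hcop this
      · show q*r - q - r - (q*r - q - r - m) = m
        omega
  have hsum : B.card + A.card = (q-1)*(r-1) := by
    have := Finset.card_filter_add_card_filter_not
      (s := Finset.range ((q-1)*(r-1))) (p := fun n => n ∈ gen2 q r)
    simpa using this
  have hδ : ((gen2 q r)ᶜ).ncard = A.card :=
    (gaps_card hr hcop (le_refl ((q-1)*(r-1)))).symm
  omega

lemma card_gen2_filter {x y r' q' M : ℕ} (hy : 0 < y) (hcop : Nat.Coprime x y)
    (hr'y : r' ≤ y) (hM1 : M ≤ r' * x) (hM2 : M ≤ q' * y)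
    [DecidablePred (· ∈ gen2 x y)] :
    ((Finset.range M).filter (· ∈ gen2 x y)).card
      = (((Finset.range r') ×ˢ (Finset.range q')).filter
          (fun ij => ij.1*x + ij.2*y < M)).card := by
  symm
  refine Finset.card_bij (fun ij _ => ij.1*x + ij.2*y) ?_ ?_ ?_
  · rintro ⟨i,j⟩ hij
    simp only [Finset.mem_filter, Finset.mem_product, Finset.mem_range] at hij ⊢
    exact ⟨hij.2, ⟨i, j, rfl⟩⟩
  · rintro ⟨i,j⟩ h1 ⟨i',j'⟩ h2 heq
    simp only [Finset.mem_filter, Finset.mem_product, Finset.mem_range] at h1 h2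
    dsimp only at heq
    have hmod : i*x ≡ i'*x [MOD y] := by
      have e1 : (i*x) % y = (i*x + j*y) % y := (Nat.add_mul_mod_self_right _ _ _).symm
      have e2 : (i'*x) % y = (i'*x + j'*y) % y := (Nat.add_mul_mod_self_right _ _ _).symm
      unfold Nat.ModEq
      rw [e1, e2, heq]
    have hmod' : x*i ≡ x*i' [MOD y] := by rwa [mul_comm i x, mul_comm i' x] at hmod
    have hmod2 : i ≡ i' [MOD y] :=
      Nat.ModEq.cancel_left_of_coprime (c := x) hcop.symm hmod'
    have hii : i = i' := by
      have h3 := hmod2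
      unfold Nat.ModEq at h3
      rw [Nat.mod_eq_of_lt (by omega), Nat.mod_eq_of_lt (by omega)] at h3
      exact h3
    subst hii
    have hjj : j = j' := Nat.eq_of_mul_eq_mul_right hy (by omega)
    simp [hjj]
  · intro n hn
    simp only [Finset.mem_filter, Finset.mem_range] at hn
    obtain ⟨hnM, i, j, rfl⟩ := hn
    have hi : i < r' := by
      by_contra hc
      have : r'*x ≤ i*x := Nat.mul_le_mul_right x (by omega)
      omega
    have hj : j < q' := by
      by_contra hc
      have : q'*y ≤ j*y := Nat.mul_le_mul_right y (by omega)
      omega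
    exact ⟨(i,j), by
      simp only [Finset.mem_filter, Finset.mem_product, Finset.mem_range]
      exact ⟨⟨hi, hj⟩, hnM⟩, rfl⟩

/-- For `2 ≤ q < r` coprime, `p ≥ 2qr − 1` with `gcd(p, 2qr) = gcd(p+2, 2qr) = 1`,
`δ_T = #(ℕ \ ⟨q,r⟩)` and `S' = ⟨qp, r(p+2)⟩`: `S'` is cofinite,
`Γ_{S'}(δ_T + q − 1) = (q−1)r(p+2)` and `Γ_{S'}(δ_T + r − 1) = (r−1)qp`. -/
theorem stmt12 (q r p : ℕ) (hq : 2 ≤ q) (hqr : q < r) (hcop : Nat.gcd q r = 1)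
    (hp : 2 * q * r - 1 ≤ p) (hp1 : Nat.gcd p (2 * q * r) = 1)
    (hp2 : Nat.gcd (p + 2) (2 * q * r) = 1) :
    ((gen2 (q * p) (r * (p + 2)))ᶜ).Finite ∧
    enumFun (gen2 (q * p) (r * (p + 2))) (((gen2 q r)ᶜ).ncard + q - 1)
      = (q - 1) * (r * (p + 2)) ∧
    enumFun (gen2 (q * p) (r * (p + 2))) (((gen2 q r)ᶜ).ncard + r - 1)
      = (r - 1) * (q * p) := by
  classical
  have hr3 : 3 ≤ r := by omega
  have hq0 : 0 < q := by omega
  have hr0 : 0 < r := by omega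
  have h2qr : 2*q*r = 2*(q*r) := by ring
  have hq3r : q*3 ≤ q*r := Nat.mul_le_mul_left q hr3
  have hp11 : 2*(q*r) ≤ p + 1 := by omega
  set a := q*p with ha
  set b := r*(p+2) with hb
  have hcop' : Nat.Coprime q r := hcop
  have hq_p2 : Nat.Coprime q (p+2) :=
    (Nat.Coprime.coprime_dvd_right ⟨2*r, by ring⟩ hp2).symm
  have hp_r : Nat.Coprime p r :=
    Nat.Coprime.coprime_dvd_right ⟨2*q, by ring⟩ hp1
  have hp_2 : Nat.Coprime p 2 :=
    Nat.Coprime.coprime_dvd_right ⟨q*r, by ring⟩ hp1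
  have hp_p2 : Nat.Coprime p (p+2) := by
    rw [show p + 2 = 2 + p from by ring]
    simpa using hp_2
  have hab : Nat.Coprime a b :=
    Nat.Coprime.mul (hcop'.mul_right hq_p2) (hp_r.mul_right hp_p2)
  have hb0 : 0 < b := by
    rw [hb]; positivity
  have hfin : ((gen2 a b)ᶜ).Finite := by
    apply Set.Finite.subset (Set.finite_Iio ((a-1)*(b-1)))
    intro n hn
    simp only [Set.mem_compl_iff] at hn
    simp only [Set.mem_Iio]
    by_contra hc
    exact hn (mem_of_ge hb0 hab (by omega))
  have hgen := genus_s12 hq hqr hcop'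
  have hrb : r ≤ b := by
    have : r*1 ≤ r*(p+2) := Nat.mul_le_mul_left r (by omega)
    rw [hb]; omega
  refine ⟨hfin, ?_, ?_⟩
  · -- first equation
    have key1 : Nat.count (· ∈ gen2 a b) ((q-1)*b) = ((gen2 q r)ᶜ).ncard + q - 1 := by
      rw [Nat.count_eq_card_filter_range]
      have h1 : (q-1)*(p+2) ≤ q*p := by
        have e : (q-1)*(p+2) + (p+2) = q*(p+2) := by
          calc (q-1)*(p+2) + (p+2) = ((q-1)+1)*(p+2) := by ring
            _ = q*(p+2) := by rw [show q-1+1 = q from by omega]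
        have e2 : q*(p+2) = q*p + 2*q := by ring
        omega
      have hMa : (q-1)*b ≤ r*a := by
        calc (q-1)*b = r*((q-1)*(p+2)) := by rw [hb]; ring
          _ ≤ r*(q*p) := Nat.mul_le_mul_left r h1
          _ = r*a := by rw [ha]
      have hMb : (q-1)*b ≤ q*b := Nat.mul_le_mul_right b (by omega)
      have c1 := card_gen2_filter (x := a) (y := b) (r' := r) (q' := q)
        (M := (q-1)*b) hb0 hab hrb hMa hMb
      have c2 := card_gen2_filter (x := q) (y := r) (r' := r) (q' := q)
        (M := (q-1)*r) hr0 hcop' (le_refl r)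
        (by rw [mul_comm r q]; exact Nat.mul_le_mul_right r (by omega))
        (Nat.mul_le_mul_right r (by omega))
      have hDeq : ((Finset.range r ×ˢ Finset.range q).filter
            (fun ij => ij.1*a + ij.2*b < (q-1)*b))
          = ((Finset.range r ×ˢ Finset.range q).filter
            (fun ij => ij.1*q + ij.2*r < (q-1)*r)) := by
        apply Finset.filter_congr
        rintro ⟨i,j⟩ hij
        simp only [Finset.mem_product, Finset.mem_range] at hij
        obtain ⟨hi, hj⟩ := hij
        dsimp only
        have e1 : i*a + j*b = p*(i*q) + p*(j*r) + 2*(j*r) := by rw [ha, hb]; ring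
        have e2 : (q-1)*b = p*((q-1)*r) + 2*((q-1)*r) := by rw [hb]; ring
        have hq1r : (q-1)*r + r = q*r := by
          calc (q-1)*r + r = ((q-1)+1)*r := by ring
            _ = q*r := by rw [show q-1+1 = q from by omega]
        have hjr : j*r < q*r := Nat.mul_lt_mul_of_lt_of_le hj (le_refl r) hr0
        constructor
        · intro hv
          by_contra hcon
          push_neg at hcon
          rcases Nat.lt_or_ge ((q-1)*r) (i*q + j*r) with hgt | hle2
          · have hmul : p*((q-1)*r) + p ≤ p*(i*q) + p*(j*r) := by
              have h4 := Nat.mul_le_mul_left p (show (q-1)*r + 1 ≤ i*q + j*r from hgt)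
              have ee : p*((q-1)*r + 1) = p*((q-1)*r) + p := by ring
              have ee2 : p*(i*q + j*r) = p*(i*q) + p*(j*r) := by ring
              omega
            omega
          · have heq2 : i*q + j*r = (q-1)*r := by omega
            have hjq : j ≤ q-1 := by
              by_contra hc2
              have : (q-1)*r < j*r :=
                Nat.mul_lt_mul_of_lt_of_le (by omega) (le_refl r) hr0
              omega
            have hsub : ((q-1)-j)*r = (q-1)*r - j*r := Nat.sub_mul _ _ _
            have hiq : i*q = ((q-1)-j)*r := by omega
            have hdvd : q ∣ ((q-1)-j)*r := hiq ▸ dvd_mul_left q i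
            have hdj : q ∣ (q-1)-j := hcop'.dvd_of_dvd_mul_right hdvd
            have hj0 : (q-1)-j = 0 := by
              rcases Nat.eq_zero_or_pos ((q-1)-j) with h0 | h0
              · exact h0
              · exfalso; have := Nat.le_of_dvd h0 hdj; omega
            have hjq1 : j = q-1 := by omega
            have hzr : ((q-1)-j)*r = 0 := by rw [hj0]; ring
            have hi0 : i = 0 := by
              have hiq0 : i*q = 0 := by omega
              rcases Nat.mul_eq_zero.mp hiq0 with h0 | h0
              · exact h0
              · omega
            rw [hi0, hjq1] at hv
            simp at hv
        · intro hL
          have hmul : p*(i*q) + p*(j*r) + p ≤ p*((q-1)*r) := by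
            have h4 := Nat.mul_le_mul_left p (show i*q + j*r + 1 ≤ (q-1)*r from hL)
            have ee : p*(i*q + j*r + 1) = p*(i*q) + p*(j*r) + p := by ring
            omega
          omega
      rw [c1, hDeq, ← c2]
      have hgc : ((Finset.range ((q-1)*r)).filter (fun n => n ∉ gen2 q r)).card
          = ((gen2 q r)ᶜ).ncard :=
        gaps_card hr0 hcop' (Nat.mul_le_mul_left (q-1) (by omega))
      have hsum := Finset.card_filter_add_card_filter_not
        (s := Finset.range ((q-1)*r)) (p := fun n => n ∈ gen2 q r)
      simp only [Finset.card_range] at hsum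
      have hq1rr : (q-1)*r + r = q*r := by
        calc (q-1)*r + r = ((q-1)+1)*r := by ring
          _ = q*r := by rw [show q-1+1 = q from by omega]
      omega
    have mem1 : (q-1)*b ∈ gen2 a b := ⟨0, q-1, by ring⟩
    have hnth := Nat.nth_count (p := (· ∈ gen2 a b)) mem1
    rw [key1] at hnth
    exact hnth
  · -- second equation
    have key2 : Nat.count (· ∈ gen2 a b) ((r-1)*a) = ((gen2 q r)ᶜ).ncard + r - 1 := by
      rw [Nat.count_eq_card_filter_range]
      have hMa : (r-1)*a ≤ r*a := Nat.mul_le_mul_right a (by omega)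
      have hMb : (r-1)*a ≤ q*b := by
        have h1 : (r-1)*p ≤ r*(p+2) := Nat.mul_le_mul (by omega) (by omega)
        calc (r-1)*a = q*((r-1)*p) := by rw [ha]; ring
          _ ≤ q*(r*(p+2)) := Nat.mul_le_mul_left q h1
          _ = q*b := by rw [hb]
      have c1 := card_gen2_filter (x := a) (y := b) (r' := r) (q' := q)
        (M := (r-1)*a) hb0 hab hrb hMa hMb
      have c2 := card_gen2_filter (x := q) (y := r) (r' := r) (q' := q)
        (M := (r-1)*q) hr0 hcop' (le_refl r)
        (Nat.mul_le_mul_right q (by omega))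
        (by rw [mul_comm q r]; exact Nat.mul_le_mul_right q (by omega))
      have hDeq : ((Finset.range r ×ˢ Finset.range q).filter
            (fun ij => ij.1*a + ij.2*b < (r-1)*a))
          = ((Finset.range r ×ˢ Finset.range q).filter
            (fun ij => ij.1*q + ij.2*r < (r-1)*q)) := by
        apply Finset.filter_congr
        rintro ⟨i,j⟩ hij
        simp only [Finset.mem_product, Finset.mem_range] at hij
        obtain ⟨hi, hj⟩ := hij
        dsimp only
        have e1 : i*a + j*b = p*(i*q) + p*(j*r) + 2*(j*r) := by rw [ha, hb]; ring
        have e2 : (r-1)*a = p*((r-1)*q) := by rw [ha]; ring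
        have hjr : j*r < q*r := Nat.mul_lt_mul_of_lt_of_le hj (le_refl r) hr0
        constructor
        · intro hv
          by_contra hcon
          push_neg at hcon
          have hmul : p*((r-1)*q) ≤ p*(i*q) + p*(j*r) := by
            have h4 := Nat.mul_le_mul_left p hcon
            have ee2 : p*(i*q + j*r) = p*(i*q) + p*(j*r) := by ring
            omega
          omega
        · intro hL
          have hmul : p*(i*q) + p*(j*r) + p ≤ p*((r-1)*q) := by
            have h4 := Nat.mul_le_mul_left p (show i*q + j*r + 1 ≤ (r-1)*q from hL)
            have ee : p*(i*q + j*r + 1) = p*(i*q) + p*(j*r) + p := by ring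
            omega
          omega
      rw [c1, hDeq, ← c2]
      have hcomm : (q-1)*(r-1) = (r-1)*(q-1) := Nat.mul_comm _ _
      have hgc : ((Finset.range ((r-1)*q)).filter (fun n => n ∉ gen2 q r)).card
          = ((gen2 q r)ᶜ).ncard := by
        refine gaps_card hr0 hcop' ?_
        have := Nat.mul_le_mul_left (r-1) (show q-1 ≤ q from by omega)
        omega
      have hsum := Finset.card_filter_add_card_filter_not
        (s := Finset.range ((r-1)*q)) (p := fun n => n ∈ gen2 q r)
      simp only [Finset.card_range] at hsum
      have hr1qq : (r-1)*q + q = r*q := by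
        calc (r-1)*q + q = ((r-1)+1)*q := by ring
          _ = r*q := by rw [show r-1+1 = r from by omega]
      have hcm : q*r = r*q := Nat.mul_comm q r
      omega
    have mem2 : (r-1)*a ∈ gen2 a b := ⟨r-1, 0, by ring⟩
    have hnth := Nat.nth_count (p := (· ∈ gen2 a b)) mem2
    rw [key2] at hnth
    exact hnth
end
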